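/- arXiv:2103.02135 — 6 statements merged into one kernel-verified Lean document; each statement's English description precedes it below -/
import Mathlib

section
/- The number of partitions in which every part occurs at least twice and total size n equals the number of pairs (α, β) where α is a partition into even parts, β is a partition into distinct multiples of 3, and |α| + |β| = n. -/
/-- A multiset of natural numbers represents a partition if all parts are positive. -/
def IsPartitionM (m : Multiset ℕ) : Prop := ∀ i ∈ m, 0 < i

/-- A partition all of whose parts are even (and positive). -/
def IsEvenPartition (m : Multiset ℕ) : Prop := IsPartitionM m ∧ ∀ i ∈ m, Even i

/-- A staircase partition: parts k, k-1, ..., 2, 1 (possibly empty). -/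
def IsStaircase (m : Multiset ℕ) : Prop := ∃ k : ℕ, m = (Multiset.range k).map (· + 1)

/-- An odd staircase: parts 2k-1, 2k-3, ..., 3, 1 (possibly empty); its size is k². -/
def IsOddStaircase (m : Multiset ℕ) : Prop := ∃ k : ℕ, m = (Multiset.range k).map (fun i => 2 * i + 1)

/-- A partition into distinct odd parts. -/
def IsDistinctOdd (m : Multiset ℕ) : Prop := m.Nodup ∧ ∀ i ∈ m, Odd i

/-- A partition whose odd parts are distinct (even parts unrestricted). -/
def IsPOD (m : Multiset ℕ) : Prop := IsPartitionM m ∧ ∀ i ∈ m, Odd i → m.count i ≤ 1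

/-- A partition into distinct parts, all divisible by 3. -/
def IsDistinctMul3 (m : Multiset ℕ) : Prop := IsPartitionM m ∧ m.Nodup ∧ ∀ i ∈ m, 3 ∣ i

/-- An overpartition: a partition together with a set of overlined part sizes,
each of which must occur in the partition. -/
def IsOverpartition (x : Multiset ℕ × Finset ℕ) : Prop :=
  IsPartitionM x.1 ∧ ∀ s ∈ x.2, s ∈ x.1

/-- A partition with designated summands: a partition together with, for each part size
occurring with multiplicity `c`, a choice of designated occurrence in `{1, ..., c}`
(and `0` for non-occurring sizes). -/
def IsDesignated (x : Multiset ℕ × (ℕ → ℕ)) : Prop :=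
  IsPartitionM x.1 ∧ ∀ s : ℕ,
    (0 < x.1.count s → 1 ≤ x.2 s ∧ x.2 s ≤ x.1.count s) ∧ (x.1.count s = 0 → x.2 s = 0)

open Multiset Finset

/-- multiset with count function `c` on finset `s`. -/
def mkM (s : Finset ℕ) (c : ℕ → ℕ) : Multiset ℕ := ∑ d ∈ s, Multiset.replicate (c d) d

lemma count_mkM (s : Finset ℕ) (c : ℕ → ℕ) (e : ℕ) :
    (mkM s c).count e = if e ∈ s then c e else 0 := by
  rw [mkM, Multiset.count_sum']
  simp only [Multiset.count_replicate]
  rw [Finset.sum_ite_eq' s e c]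

lemma mem_mkM {s : Finset ℕ} {c : ℕ → ℕ} {e : ℕ} (h : e ∈ mkM s c) : e ∈ s := by
  by_contra hc
  have := count_mkM s c e
  rw [if_neg hc] at this
  exact absurd this (by simpa using (Multiset.count_pos.2 h).ne')

lemma sum_mkM (s : Finset ℕ) (c : ℕ → ℕ) : (mkM s c).sum = ∑ d ∈ s, c d * d := by
  rw [mkM, ← Multiset.coe_sumAddMonoidHom, map_sum]
  simp [Multiset.coe_sumAddMonoidHom, Multiset.sum_replicate]

lemma sum_eq_toFinset_sum (m : Multiset ℕ) : m.sum = ∑ d ∈ m.toFinset, m.count d * d := by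
  conv_lhs => rw [← Multiset.toFinset_sum_count_nsmul_eq m]
  rw [← Multiset.coe_sumAddMonoidHom, map_sum]
  simp [Multiset.coe_sumAddMonoidHom, Multiset.nsmul_singleton, Multiset.sum_replicate]

/-- Forward map: multiplicity `c` of part `d` becomes `(c - 3·[c odd])/2` copies of `2d`
plus one `3d` if `c` is odd. -/
def fwdP (m : Multiset ℕ) : Multiset ℕ × Multiset ℕ :=
  ((mkM m.toFinset fun d => (m.count d - (if m.count d % 2 = 1 then 3 else 0)) / 2).map
      (fun d => 2 * d),
   ((m.toFinset.filter fun d => m.count d % 2 = 1).val).map (fun d => 3 * d))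

def bwdS (p : Multiset ℕ × Multiset ℕ) : Finset ℕ :=
  (p.1.map (· / 2)).toFinset ∪ (p.2.map (· / 3)).toFinset

def bwdP (p : Multiset ℕ × Multiset ℕ) : Multiset ℕ :=
  mkM (bwdS p) fun d => 2 * p.1.count (2 * d) + 3 * (if 3 * d ∈ p.2 then 1 else 0)

lemma two_mul_inj : Function.Injective (fun d : ℕ => 2 * d) := fun a b h => by simp only [] at h; omega
lemma three_mul_inj : Function.Injective (fun d : ℕ => 3 * d) := fun a b h => by simp only [] at h; omega

lemma count_fwdP1 (m : Multiset ℕ) (d : ℕ) :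
    (fwdP m).1.count (2 * d) =
      if d ∈ m.toFinset then (m.count d - (if m.count d % 2 = 1 then 3 else 0)) / 2 else 0 := by
  rw [fwdP, Multiset.count_map_eq_count' _ _ two_mul_inj, count_mkM]

lemma count_fwdP1_odd (m : Multiset ℕ) {e : ℕ} (he : ¬ 2 ∣ e) : (fwdP m).1.count e = 0 := by
  rw [Multiset.count_eq_zero]
  intro h
  rw [fwdP, Multiset.mem_map] at h
  obtain ⟨d, _, rfl⟩ := h
  exact he ⟨d, rfl⟩

lemma mem_fwdP2 (m : Multiset ℕ) (d : ℕ) :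
    3 * d ∈ (fwdP m).2 ↔ d ∈ m.toFinset ∧ m.count d % 2 = 1 := by
  rw [fwdP]
  simp only [Multiset.mem_map]
  constructor
  · rintro ⟨a, ha, h3⟩
    have : a = d := by omega
    subst this
    simpa [Finset.mem_filter] using ha
  · intro h
    exact ⟨d, by simpa [Finset.mem_filter] using h, rfl⟩

lemma mem_fwdP2_dvd (m : Multiset ℕ) {e : ℕ} (he : e ∈ (fwdP m).2) : 3 ∣ e := by
  rw [fwdP, Multiset.mem_map] at he
  obtain ⟨d, _, rfl⟩ := he
  exact ⟨d, rfl⟩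

lemma count_bwdP (p : Multiset ℕ × Multiset ℕ) (d : ℕ) :
    (bwdP p).count d = 2 * p.1.count (2 * d) + 3 * (if 3 * d ∈ p.2 then 1 else 0) := by
  rw [bwdP, count_mkM]
  by_cases h : d ∈ bwdS p
  · rw [if_pos h]
  · rw [if_neg h]
    rw [bwdS, Finset.mem_union, not_or] at h
    have h2 : 3 * d ∉ p.2 := fun h2 => h.2 (Multiset.mem_toFinset.2
      (Multiset.mem_map.2 ⟨3 * d, h2, by show 3 * d / 3 = d; omega⟩))
    have h1 : p.1.count (2 * d) = 0 := by
      rw [Multiset.count_eq_zero]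
      intro hm
      exact h.1 (Multiset.mem_toFinset.2
        (Multiset.mem_map.2 ⟨2 * d, hm, by show 2 * d / 2 = d; omega⟩))
    simp [h1, h2]

lemma sum_map_const_mul (k : ℕ) (t : Multiset ℕ) :
    (t.map (fun d => k * d)).sum = k * t.sum := by
  induction t using Multiset.induction with
  | empty => simp
  | cons a s ih => simp [ih, mul_add]

lemma bwd_fwd (m : Multiset ℕ) (h2 : ∀ i ∈ m, 2 ≤ m.count i) : bwdP (fwdP m) = m := by
  ext d
  rw [count_bwdP, count_fwdP1]
  by_cases hd : d ∈ m.toFinset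
  · have hc : 2 ≤ m.count d := h2 d (Multiset.mem_toFinset.1 hd)
    rw [if_pos hd]
    by_cases ho : m.count d % 2 = 1
    · rw [if_pos ho, if_pos ((mem_fwdP2 m d).2 ⟨hd, ho⟩)]
      omega
    · rw [if_neg ho, if_neg (fun hmem => ho ((mem_fwdP2 m d).1 hmem).2)]
      omega
  · have hc : m.count d = 0 :=
      Multiset.count_eq_zero.2 (fun h => hd (Multiset.mem_toFinset.2 h))
    rw [if_neg hd, if_neg (fun hmem => hd ((mem_fwdP2 m d).1 hmem).1)]
    omega

lemma fwd_bwd (p : Multiset ℕ × Multiset ℕ) (hα : ∀ a ∈ p.1, Even a)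
    (hβn : p.2.Nodup) (hβ3 : ∀ b ∈ p.2, 3 ∣ b) : fwdP (bwdP p) = p := by
  have hcb := count_bwdP p
  refine Prod.ext ?_ ?_
  · ext e
    by_cases he : 2 ∣ e
    · obtain ⟨d, rfl⟩ := he
      rw [count_fwdP1]
      have hc := hcb d
      by_cases hd : d ∈ (bwdP p).toFinset
      · rw [if_pos hd]
        have hpos : 0 < (bwdP p).count d := Multiset.count_pos.2 (Multiset.mem_toFinset.1 hd)
        by_cases hm : 3 * d ∈ p.2
        · rw [if_pos hm] at hc; rw [hc]; split_ifs with hp <;> omega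
        · rw [if_neg hm] at hc; rw [hc]; split_ifs with hp <;> omega
      · rw [if_neg hd]
        have h0 : (bwdP p).count d = 0 :=
          Multiset.count_eq_zero.2 (fun h => hd (Multiset.mem_toFinset.2 h))
        split_ifs at hc <;> omega
    · rw [count_fwdP1_odd _ he,
        Eq.symm (Multiset.count_eq_zero.2 (fun h => he (even_iff_two_dvd.1 (hα e h))))]
  · have hnod : (fwdP (bwdP p)).2.Nodup := by
      rw [fwdP]
      exact Multiset.Nodup.map three_mul_inj (Finset.filter _ _).nodup
    rw [Multiset.Nodup.ext hnod hβn]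
    intro e
    constructor
    · intro hmem
      obtain ⟨d, rfl⟩ := mem_fwdP2_dvd _ hmem
      rw [mem_fwdP2] at hmem
      obtain ⟨hmem1, hmem2⟩ := hmem
      have hc := hcb d
      by_cases hm : 3 * d ∈ p.2
      · exact hm
      · rw [if_neg hm] at hc; omega
    · intro hmem
      obtain ⟨d, rfl⟩ := hβ3 _ hmem
      rw [mem_fwdP2]
      have hc := hcb d
      rw [if_pos hmem] at hc
      refine ⟨?_, by omega⟩
      rw [Multiset.mem_toFinset, ← Multiset.count_pos]
      omega

lemma sum_fwdP (m : Multiset ℕ) (h2 : ∀ i ∈ m, 2 ≤ m.count i) :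
    (fwdP m).1.sum + (fwdP m).2.sum = m.sum := by
  rw [fwdP]
  simp only
  have h2nd : ((m.toFinset.filter fun d => m.count d % 2 = 1).val.map (fun d => 3 * d)).sum
      = ∑ d ∈ m.toFinset.filter fun d => m.count d % 2 = 1, 3 * d := rfl
  rw [h2nd, sum_map_const_mul, sum_mkM, sum_eq_toFinset_sum,
    Finset.sum_filter, Finset.mul_sum, ← Finset.sum_add_distrib]
  apply Finset.sum_congr rfl
  intro d hd
  have hc : 2 ≤ m.count d := h2 d (Multiset.mem_toFinset.1 hd)
  set c := m.count d with hcdef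
  by_cases ho : c % 2 = 1
  · rw [if_pos ho, if_pos ho]
    have h3 : 2 * ((c - 3) / 2) = c - 3 := by omega
    calc 2 * ((c - 3) / 2 * d) + 3 * d = 2 * ((c - 3) / 2) * d + 3 * d := by ring
      _ = (c - 3) * d + 3 * d := by rw [h3]
      _ = (c - 3 + 3) * d := by ring
      _ = c * d := by rw [Nat.sub_add_cancel (by omega)]
  · rw [if_neg ho, if_neg ho]
    have h3 : 2 * ((c - 0) / 2) = c := by omega
    calc 2 * ((c - 0) / 2 * d) + 0 = 2 * ((c - 0) / 2) * d := by ring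
      _ = c * d := by rw [h3]

lemma fwdP_mem (m : Multiset ℕ) (hm : ∀ i ∈ m, 0 < i) :
    ((∀ a ∈ (fwdP m).1, 0 < a) ∧ (∀ a ∈ (fwdP m).1, Even a)) ∧
    ((∀ b ∈ (fwdP m).2, 0 < b) ∧ (fwdP m).2.Nodup ∧ (∀ b ∈ (fwdP m).2, 3 ∣ b)) := by
  refine ⟨⟨?_, ?_⟩, ?_, ?_, ?_⟩
  · intro a ha
    rw [fwdP, Multiset.mem_map] at ha
    obtain ⟨d, hd, rfl⟩ := ha
    have := hm d (Multiset.mem_toFinset.1 (mem_mkM hd))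
    omega
  · intro a ha
    rw [fwdP, Multiset.mem_map] at ha
    obtain ⟨d, _, rfl⟩ := ha
    exact ⟨d, by ring⟩
  · intro b hb
    rw [fwdP, Multiset.mem_map] at hb
    obtain ⟨d, hd, rfl⟩ := hb
    have hd' : d ∈ m.toFinset := Finset.mem_of_mem_filter d hd
    have := hm d (Multiset.mem_toFinset.1 hd')
    omega
  · rw [fwdP]
    exact Multiset.Nodup.map three_mul_inj (Finset.filter _ _).nodup
  · intro b hb
    exact mem_fwdP2_dvd _ hb

lemma bwdP_mem (p : Multiset ℕ × Multiset ℕ) (hα0 : ∀ a ∈ p.1, 0 < a)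
    (hα : ∀ a ∈ p.1, Even a) (hβ0 : ∀ b ∈ p.2, 0 < b) (hβ3 : ∀ b ∈ p.2, 3 ∣ b) :
    (∀ i ∈ bwdP p, 0 < i) ∧ (∀ i ∈ bwdP p, 2 ≤ (bwdP p).count i) := by
  constructor
  · intro d hd
    have := mem_mkM hd
    rw [bwdS, Finset.mem_union] at this
    rcases this with h | h
    · rw [Multiset.mem_toFinset, Multiset.mem_map] at h
      obtain ⟨a, ha, rfl⟩ := h
      obtain ⟨k, hk⟩ := hα a ha
      have := hα0 a ha
      omega
    · rw [Multiset.mem_toFinset, Multiset.mem_map] at h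
      obtain ⟨b, hb, rfl⟩ := h
      obtain ⟨k, hk⟩ := hβ3 b hb
      have := hβ0 b hb
      omega
  · intro i hi
    have hpos : 0 < (bwdP p).count i := Multiset.count_pos.2 hi
    have hc := count_bwdP p i
    split_ifs at hc <;> omega

theorem mult_ge_two_decomposition (n : ℕ) :
    Nat.card {m : Multiset ℕ // IsPartitionM m ∧ (∀ i ∈ m, 2 ≤ m.count i) ∧ m.sum = n} =
    Nat.card {x : Multiset ℕ × Multiset ℕ //
      IsEvenPartition x.1 ∧ IsDistinctMul3 x.2 ∧ x.1.sum + x.2.sum = n} := by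
  apply Nat.card_congr
  refine Equiv.mk
    (fun x => ⟨fwdP x.1, ?_⟩) (fun y => ⟨bwdP y.1, ?_⟩) ?_ ?_
  · obtain ⟨m, hm1, hm2, hm3⟩ := x
    obtain ⟨⟨h1, h2⟩, h3, h4, h5⟩ := fwdP_mem m hm1
    exact ⟨⟨h1, h2⟩, ⟨h3, h4, h5⟩, by rw [sum_fwdP m hm2, hm3]⟩
  · obtain ⟨p, ⟨hα0, hα⟩, ⟨hβ0, hβn, hβ3⟩, hsum⟩ := y
    obtain ⟨h1, h2⟩ := bwdP_mem p hα0 hα hβ0 hβ3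
    refine ⟨h1, h2, ?_⟩
    have := sum_fwdP (bwdP p) h2
    rw [fwd_bwd p hα hβn hβ3] at this
    show (bwdP p).sum = n
    omega
  · rintro ⟨m, hm1, hm2, hm3⟩
    exact Subtype.ext (bwd_fwd m hm2)
  · rintro ⟨p, ⟨hα0, hα⟩, ⟨hβ0, hβn, hβ3⟩, hsum⟩
    exact Subtype.ext (fwd_bwd p hα hβn hβ3)
end

section
/- There is a size-preserving bijection between 2-color partitions of n with colors r and b where color b appears only on even parts, and quadruples (λ¹, λ², λ³, λ⁴) where λ¹, λ², λ³ are partitions into even parts, λ⁴ is a staircase partition, and |λ¹|+|λ²|+|λ³|+|λ⁴| = n. -/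
namespace TwoColorAux

/-- Triangular number: sum 0+1+...+(N-1). -/
def T (N : ℕ) : ℕ := (List.range N).sum

lemma T_succ (N : ℕ) : T (N+1) = T N + N := by
  simp [T, List.range_succ]

lemma T_add (a b : ℕ) : T (a + b) = T a + T b + a * b := by
  induction b with
  | zero => simp [T]
  | succ b ih => rw [← Nat.add_assoc, T_succ, ih, T_succ]; ring

lemma T_sq (M : ℕ) : 2 * T M + M = M * M := by
  induction M with
  | zero => simp [T]
  | succ M ih => rw [T_succ]; ring_nf; ring_nf at ih; omega

/-- padded ascending parts list -/
def pList (N : ℕ) (π : Multiset ℕ) : List ℕ :=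
  List.replicate (N - Multiset.card π) 0 ++ π.sort (· ≤ ·)

/-- beta list: add index -/
def bList (N : ℕ) (π : Multiset ℕ) : List ℕ :=
  (pList N π).zipIdx.map (fun p => p.1 + p.2)

def toBeta (N : ℕ) (π : Multiset ℕ) : Multiset ℕ := (bList N π : Multiset ℕ)

/-- subtract index -/
def subList (s : List ℕ) : List ℕ := s.zipIdx.map (fun p => p.1 - p.2)

def ofBeta (S : Multiset ℕ) : Multiset ℕ :=
  (subList (S.sort (· ≤ ·)) : Multiset ℕ).filter (0 < ·)

lemma length_pList (N : ℕ) (π : Multiset ℕ) (h : Multiset.card π ≤ N) :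
    (pList N π).length = N := by
  simp [pList, Multiset.length_sort]
  omega

lemma sorted_pList (N : ℕ) (π : Multiset ℕ) : (pList N π).Pairwise (· ≤ ·) := by
  rw [pList, List.pairwise_append]
  refine ⟨?_, Multiset.pairwise_sort _ _, ?_⟩
  · exact List.pairwise_replicate.2 (Or.inr le_rfl)
  · intro a ha b _
    simp [List.eq_of_mem_replicate ha]

lemma length_bList (N : ℕ) (π : Multiset ℕ) : (bList N π).length = (pList N π).length := by
  simp [bList]

lemma getElem_bList (N : ℕ) (π : Multiset ℕ) (i : ℕ) (h : i < (bList N π).length) :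
    (bList N π)[i] = (pList N π)[i]'(by simpa [length_bList] using h) + i := by
  simp [bList, List.getElem_zipIdx]

lemma sorted_bList (N : ℕ) (π : Multiset ℕ) : (bList N π).Pairwise (· < ·) := by
  rw [List.pairwise_iff_getElem]
  intro i j hi hj hij
  rw [getElem_bList _ _ _ hi, getElem_bList _ _ _ hj]
  have hs := sorted_pList N π
  rw [List.pairwise_iff_getElem] at hs
  have := hs i j (by simpa [length_bList] using hi) (by simpa [length_bList] using hj) hij
  omega

/-- sum of bList -/
lemma sum_enum_add (l : List ℕ) : (l.zipIdx.map (fun p => p.1 + p.2)).sum = l.sum + T l.length := by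
  induction l using List.reverseRecOn with
  | nil => simp [T]
  | append_singleton l a ih =>
      rw [List.zipIdx_append]
      simp only [List.map_append, List.sum_append, ih]
      simp [List.zipIdx_singleton, T_succ]
      ring

lemma sum_bList (N : ℕ) (π : Multiset ℕ) (h : Multiset.card π ≤ N) :
    (bList N π).sum = π.sum + T N := by
  rw [bList, sum_enum_add, length_pList _ _ h]
  congr 1
  rw [pList, List.sum_append, List.sum_replicate]
  simp
  conv_rhs => rw [← Multiset.sort_eq π (fun x1 x2 => x1 ≤ x2)]
  exact (Multiset.sum_coe _).symm



end TwoColorAux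

namespace TwoColorAux2
open TwoColorAux

section
variable {s l : List ℕ}

lemma sort_coe_of_sorted {l : List ℕ} (h : l.Pairwise (· ≤ ·)) :
    Multiset.sort (l : Multiset ℕ) (· ≤ ·) = l := by
  refine List.Perm.eq_of_pairwise' (Multiset.pairwise_sort _ _) h ?_
  exact Multiset.coe_eq_coe.mp (Multiset.sort_eq _ _)

lemma gap_of_sorted (h : s.Pairwise (· < ·)) :
    ∀ d i (_h2 : i + d < s.length), s[i]'(by omega) + d ≤ s[i+d]'(by omega) := by
  rw [List.pairwise_iff_getElem] at h
  intro d
  induction d with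
  | zero => simp
  | succ d ih =>
      intro i hi
      have h1 := ih i (by omega)
      have h2 := h (i+d) (i+d+1) (by omega) (by omega) (by omega)
      simp only [← Nat.add_assoc]
      omega

lemma idx_le_of_sorted (h : s.Pairwise (· < ·)) : ∀ i, (hi : i < s.length) → i ≤ s[i] := by
  intro i hi
  have := gap_of_sorted h i 0 (by omega)
  simp only [Nat.zero_add] at this
  omega

end
end TwoColorAux2


namespace TwoColorAux3
open TwoColorAux TwoColorAux2

lemma getElem_subList (s : List ℕ) (i : ℕ) (h : i < (subList s).length) :
    (subList s)[i] = s[i]'(by simpa [subList] using h) - i := by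
  simp [subList, List.getElem_zipIdx]

lemma length_subList (s : List ℕ) : (subList s).length = s.length := by simp [subList]

lemma subList_bList (N : ℕ) (π : Multiset ℕ) : subList (bList N π) = pList N π := by
  apply List.ext_getElem
  · simp [length_subList, length_bList]
  · intro i h1 h2
    rw [getElem_subList, getElem_bList]
    omega

lemma filter_pList (N : ℕ) (π : Multiset ℕ) (hpos : ∀ i ∈ π, 0 < i) :
    (pList N π).filter (fun x => decide (0 < x)) = π.sort (· ≤ ·) := by
  rw [pList, List.filter_append]
  have h1 : (List.replicate (N - Multiset.card π) (0:ℕ)).filter (fun x => decide (0 < x)) = [] := by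
    rw [List.filter_eq_nil_iff]
    intro a ha
    simp [List.eq_of_mem_replicate ha]
  have h2 : (π.sort (· ≤ ·)).filter (fun x => decide (0 < x)) = π.sort (· ≤ ·) := by
    rw [List.filter_eq_self]
    intro a ha
    simpa using hpos a ((Multiset.mem_sort _).1 ha)
  rw [h1, h2, List.nil_append]

lemma ofBeta_toBeta (N : ℕ) (π : Multiset ℕ) (hpos : ∀ i ∈ π, 0 < i)
    (hcard : Multiset.card π ≤ N) : ofBeta (toBeta N π) = π := by
  rw [ofBeta, toBeta, sort_coe_of_sorted ((sorted_bList N π).imp le_of_lt), subList_bList,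
    Multiset.filter_coe, filter_pList _ _ hpos, Multiset.sort_eq]

lemma card_toBeta (N : ℕ) (π : Multiset ℕ) (h : Multiset.card π ≤ N) :
    Multiset.card (toBeta N π) = N := by
  rw [toBeta, Multiset.coe_card, length_bList, length_pList _ _ h]

lemma nodup_toBeta (N : ℕ) (π : Multiset ℕ) : (toBeta N π).Nodup := by
  rw [toBeta, Multiset.coe_nodup]
  exact (sorted_bList N π).nodup

lemma sum_toBeta (N : ℕ) (π : Multiset ℕ) (h : Multiset.card π ≤ N) :
    (toBeta N π).sum = π.sum + T N := by
  rw [toBeta, Multiset.sum_coe, sum_bList _ _ h]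

lemma sorted_lt_sort (S : Multiset ℕ) (hS : S.Nodup) :
    (S.sort (· ≤ ·)).Pairwise (· < ·) := by
  have h1 : (S.sort (· ≤ ·)).Pairwise (· ≤ ·) := Multiset.pairwise_sort _ _
  have h2 : (S.sort (· ≤ ·)).Nodup := by
    rw [← Multiset.coe_nodup, Multiset.sort_eq]; exact hS
  exact (h1.and h2).imp (fun h => lt_of_le_of_ne h.1 h.2)

lemma sorted_subList {s : List ℕ} (hs : s.Pairwise (· < ·)) : (subList s).Pairwise (· ≤ ·) := by
  rw [List.pairwise_iff_getElem]
  intro i j hi hj hij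
  rw [getElem_subList _ _ hi, getElem_subList _ _ hj]
  have hj' : j < s.length := by simpa [length_subList] using hj
  have := gap_of_sorted hs (j - i) i (by omega)
  simp only [show i + (j - i) = j from by omega] at this
  omega

lemma sorted_decomp {u : List ℕ} (hu : u.Pairwise (· ≤ ·)) :
    u = List.replicate (u.length - (u.filter (fun x => decide (0 < x))).length) 0
        ++ u.filter (fun x => decide (0 < x)) := by
  have hperm := (List.filter_append_perm (fun x => decide (0 < x)) u).symm
  have hrep : u.filter (fun x => !decide (0 < x)) =
      List.replicate (u.length - (u.filter (fun x => decide (0 < x))).length) 0 := by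
    rw [List.eq_replicate_iff]
    constructor
    · have := hperm.length_eq
      simp only [List.length_append] at this
      omega
    · intro b hb
      have := List.of_mem_filter hb
      simp only [Bool.not_eq_true', decide_eq_false_iff_not, Nat.not_lt, Nat.le_zero] at this
      exact this
  refine (fun hp hs => List.Perm.eq_of_pairwise' hu hs hp) ?_ ?_
  · rw [← hrep]
    exact hperm.trans List.perm_append_comm
  · rw [List.pairwise_append]
    refine ⟨List.pairwise_replicate.2 (Or.inr le_rfl), hu.filter _, ?_⟩
    intro a ha b _
    simp [List.eq_of_mem_replicate ha]

lemma pos_ofBeta (S : Multiset ℕ) : ∀ i ∈ ofBeta S, 0 < i := by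
  intro i hi
  exact Multiset.of_mem_filter hi

lemma card_ofBeta_le (S : Multiset ℕ) : Multiset.card (ofBeta S) ≤ Multiset.card S := by
  rw [ofBeta, Multiset.filter_coe, Multiset.coe_card]
  calc (List.filter _ _).length ≤ (subList (S.sort (· ≤ ·))).length :=
        List.length_filter_le _ _
    _ = _ := by rw [length_subList, Multiset.length_sort]

lemma toBeta_ofBeta (S : Multiset ℕ) (hS : S.Nodup) :
    toBeta (Multiset.card S) (ofBeta S) = S := by
  set s := S.sort (· ≤ ·) with hsdef
  have hs : s.Pairwise (· < ·) := sorted_lt_sort S hS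
  have hu : (subList s).Pairwise (· ≤ ·) := sorted_subList hs
  have hulen : (subList s).length = Multiset.card S := by
    rw [length_subList, hsdef, Multiset.length_sort]
  have hofb : ofBeta S = ↑((subList s).filter (fun x => decide (0 < x))) := by
    rw [ofBeta, Multiset.filter_coe]
  have hsort : Multiset.sort (ofBeta S) (· ≤ ·) = (subList s).filter (fun x => decide (0 < x)) := by
    rw [hofb]; exact sort_coe_of_sorted (hu.filter _)
  have hcardo : Multiset.card (ofBeta S) = ((subList s).filter (fun x => decide (0 < x))).length := by
    rw [hofb, Multiset.coe_card]
  have hp : pList (Multiset.card S) (ofBeta S) = subList s := by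
    rw [pList, hsort, hcardo, ← hulen]
    exact (sorted_decomp hu).symm
  have hb : bList (Multiset.card S) (ofBeta S) = s := by
    apply List.ext_getElem
    · rw [length_bList, hp, hulen, hsdef, Multiset.length_sort]
    · intro i h1 h2
      have hgu : i < (subList s).length := by
        rw [length_subList]; exact h2
      rw [getElem_bList]
      have heq : (pList (Multiset.card S) (ofBeta S))[i]'(by rw [hp]; exact hgu) =
          (subList s)[i]'hgu := by
        congr 1 <;> rw [hp]
      rw [heq, getElem_subList]
      have := idx_le_of_sorted hs i h2
      omega
  rw [toBeta, hb, hsdef, Multiset.sort_eq]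

lemma sum_ofBeta (S : Multiset ℕ) (hS : S.Nodup) :
    (ofBeta S).sum + T (Multiset.card S) = S.sum := by
  have h1 := sum_toBeta (Multiset.card S) (ofBeta S) (card_ofBeta_le S)
  rw [toBeta_ofBeta S hS] at h1
  omega

end TwoColorAux3


namespace TwoColorAux4
open TwoColorAux TwoColorAux2 TwoColorAux3

def eSplit (S : Multiset ℕ) : Multiset ℕ := (S.filter (fun x => Even x)).map (· / 2)
def oSplit (S : Multiset ℕ) : Multiset ℕ := (S.filter (fun x => ¬ Even x)).map (· / 2)
def unsplit (S0 S1 : Multiset ℕ) : Multiset ℕ :=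
  S0.map (fun x => 2 * x) + S1.map (fun x => 2 * x + 1)

lemma unsplit_split (S : Multiset ℕ) : unsplit (eSplit S) (oSplit S) = S := by
  rw [unsplit, eSplit, oSplit, Multiset.map_map, Multiset.map_map]
  have h1 : (S.filter (fun x => Even x)).map ((fun x => 2 * x) ∘ (· / 2)) =
      S.filter (fun x => Even x) := by
    rw [Multiset.map_congr rfl (g := id) ?_, Multiset.map_id]
    intro x hx
    have hx2 := Nat.even_iff.mp (Multiset.of_mem_filter hx)
    simp only [Function.comp_apply, id_eq]
    omega
  have h2 : (S.filter (fun x => ¬ Even x)).map ((fun x => 2 * x + 1) ∘ (· / 2)) =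
      S.filter (fun x => ¬ Even x) := by
    rw [Multiset.map_congr rfl (g := id) ?_, Multiset.map_id]
    intro x hx
    have hx1 : ¬ Even x := (Multiset.mem_filter.1 hx).2
    have hx2 := Nat.not_even_iff.mp hx1
    simp only [Function.comp_apply, id_eq]
    omega
  rw [h1, h2, Multiset.filter_add_not]

lemma eSplit_unsplit (S0 S1 : Multiset ℕ) : eSplit (unsplit S0 S1) = S0 := by
  rw [unsplit, eSplit, Multiset.filter_add, Multiset.filter_map, Multiset.filter_map]
  have h1 : Multiset.filter ((fun x => Even x) ∘ (fun x => 2 * x)) S0 = S0 := by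
    rw [Multiset.filter_eq_self]
    intro a _
    simp only [Function.comp_apply]
    exact ⟨a, by ring⟩
  have h2 : Multiset.filter ((fun x => Even x) ∘ (fun x => 2 * x + 1)) S1 = 0 := by
    rw [Multiset.filter_eq_nil]
    intro a _ h
    simp only [Function.comp_apply] at h
    have := Nat.even_iff.mp h
    omega
  rw [h1, h2, Multiset.map_zero, add_zero, Multiset.map_map]
  rw [Multiset.map_congr rfl (g := id) ?_, Multiset.map_id]
  intro x _
  simp only [Function.comp_apply, id_eq]
  omega

lemma oSplit_unsplit (S0 S1 : Multiset ℕ) : oSplit (unsplit S0 S1) = S1 := by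
  rw [unsplit, oSplit, Multiset.filter_add, Multiset.filter_map, Multiset.filter_map]
  have h1 : Multiset.filter ((fun x => ¬ Even x) ∘ (fun x => 2 * x)) S0 = 0 := by
    rw [Multiset.filter_eq_nil]
    intro a _ h
    simp only [Function.comp_apply] at h
    exact h ⟨a, by ring⟩
  have h2 : Multiset.filter ((fun x => ¬ Even x) ∘ (fun x => 2 * x + 1)) S1 = S1 := by
    rw [Multiset.filter_eq_self]
    intro a _ h
    simp only [Function.comp_apply] at h
    have := Nat.even_iff.mp h
    omega
  rw [h1, h2, Multiset.map_zero, zero_add, Multiset.map_map]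
  rw [Multiset.map_congr rfl (g := id) ?_, Multiset.map_id]
  intro x _
  simp only [Function.comp_apply, id_eq]
  omega

lemma card_unsplit (S0 S1 : Multiset ℕ) :
    Multiset.card (unsplit S0 S1) = Multiset.card S0 + Multiset.card S1 := by
  simp [unsplit]

lemma sum_map_double (s : Multiset ℕ) : (s.map (fun x => 2 * x)).sum = 2 * s.sum := by
  induction s using Multiset.induction with
  | empty => simp
  | cons a s ih => simp only [Multiset.map_cons, Multiset.sum_cons, ih]; ring

lemma sum_map_dbl1 (s : Multiset ℕ) :
    (s.map (fun x => 2 * x + 1)).sum = 2 * s.sum + Multiset.card s := by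
  induction s using Multiset.induction with
  | empty => simp
  | cons a s ih => simp only [Multiset.map_cons, Multiset.sum_cons, ih, Multiset.card_cons]; ring

lemma sum_unsplit (S0 S1 : Multiset ℕ) :
    (unsplit S0 S1).sum = 2 * S0.sum + (2 * S1.sum + Multiset.card S1) := by
  rw [unsplit, Multiset.sum_add, sum_map_double, sum_map_dbl1]

lemma nodup_unsplit (S0 S1 : Multiset ℕ) (h0 : S0.Nodup) (h1 : S1.Nodup) :
    (unsplit S0 S1).Nodup := by
  rw [unsplit, Multiset.nodup_add]
  refine ⟨h0.map (fun x y h => by omega), h1.map (fun x y h => by omega), ?_⟩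
  rw [Multiset.disjoint_left]
  intro a ha hb
  obtain ⟨x, -, hx⟩ := Multiset.mem_map.1 ha
  obtain ⟨y, -, hy⟩ := Multiset.mem_map.1 hb
  omega

lemma nodup_eSplit (S : Multiset ℕ) (h : S.Nodup) : (eSplit S).Nodup := by
  refine Multiset.Nodup.map_on ?_ (h.filter _)
  intro x hx y hy hxy
  have hx2 := Nat.even_iff.mp (Multiset.of_mem_filter hx)
  have hy2 := Nat.even_iff.mp (Multiset.of_mem_filter hy)
  omega

lemma nodup_oSplit (S : Multiset ℕ) (h : S.Nodup) : (oSplit S).Nodup := by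
  refine Multiset.Nodup.map_on ?_ (h.filter _)
  intro x hx y hy hxy
  have hx1 : ¬ Even x := (Multiset.mem_filter.1 hx).2
  have hy1 : ¬ Even y := (Multiset.mem_filter.1 hy).2
  have hx2 := Nat.not_even_iff.mp hx1
  have hy2 := Nat.not_even_iff.mp hy1
  omega

lemma card_split (S : Multiset ℕ) :
    Multiset.card (eSplit S) + Multiset.card (oSplit S) = Multiset.card S := by
  rw [eSplit, oSplit, Multiset.card_map, Multiset.card_map]
  rw [← Multiset.card_add, Multiset.filter_add_not]

/-- staircase multiset -/
def stair (k : ℕ) : Multiset ℕ := (Multiset.range k).map (· + 1)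

lemma card_stair (k : ℕ) : Multiset.card (stair k) = k := by simp [stair]

lemma sum_stair (k : ℕ) : (stair k).sum = T k + k := by
  rw [stair]
  induction k with
  | zero => simp [T]
  | succ k ih =>
      rw [Multiset.range_succ, Multiset.map_cons, Multiset.sum_cons, ih, T_succ]
      ring

def kOf (n N0 : ℕ) : ℕ := if n ≤ N0 then 2 * (N0 - n) - 1 else 2 * (n - N0)

def N0Of (n k : ℕ) : ℕ := if Odd k then n + (k + 1) / 2 else n - k / 2

lemma kOf_N0Of (n k : ℕ) (h : k % 2 = 0 → k / 2 ≤ n) : kOf n (N0Of n k) = k := by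
  simp only [kOf, N0Of, Nat.odd_iff]
  split_ifs <;> omega

lemma N0Of_kOf (n N0 : ℕ) (h : N0 ≤ 2 * n) : N0Of n (kOf n N0) = N0 := by
  simp only [kOf, N0Of, Nat.odd_iff]
  split_ifs <;> omega

lemma kOf_le (n N0 : ℕ) (h : N0 ≤ 2 * n) : kOf n N0 % 2 = 0 → kOf n N0 / 2 ≤ n := by
  simp only [kOf]
  split_ifs <;> omega

lemma key_sum (n N0 N1 : ℕ) (hN : N0 + N1 = 2 * n) :
    2 * T N0 + 2 * T N1 + N1 = T (2 * n) + (T (kOf n N0) + kOf n N0) := by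
  rcases le_or_gt n N0 with h | h
  · obtain ⟨e, rfl⟩ : ∃ e, N0 = n + e := ⟨N0 - n, by omega⟩
    obtain rfl : n = N1 + e := by omega
    have hk : kOf (N1 + e) (N1 + e + e) = 2 * e - 1 := by simp only [kOf]; split_ifs <;> omega
    rw [hk]
    rcases Nat.eq_zero_or_pos e with rfl | he
    · have h1 := T_add N1 N1
      have h2 := T_sq N1
      have h0 : T 0 = 0 := rfl
      rw [show 2 * (N1 + 0) = N1 + N1 from by ring, h1]
      norm_num
      omega
    · obtain ⟨g, rfl⟩ : ∃ g, e = g + 1 := ⟨e - 1, by omega⟩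
      have e1 : 2 * (g + 1) - 1 = 2 * g + 1 := by omega
      rw [e1,
        show N1 + (g+1) + (g+1) = N1 + (2*g+2) from by ring,
        show 2 * (N1 + (g+1)) = 2*N1 + (2*g+2) from by ring,
        T_add N1 (2*g+2), T_add (2*N1) (2*g+2),
        show 2*N1 = N1 + N1 from by ring, T_add N1 N1,
        show 2*g+2 = (2*g+1)+1 from by ring, T_succ (2*g+1)]
      have h3 := T_sq N1
      ring_nf
      ring_nf at h3
      omega
  · obtain ⟨e, rfl⟩ : ∃ e, n = N0 + e := ⟨n - N0, by omega⟩
    obtain rfl : N1 = N0 + 2 * e := by omega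
    have hk : kOf (N0 + e) N0 = 2 * e := by simp only [kOf]; split_ifs <;> omega
    rw [hk,
      T_add N0 (2*e),
      show 2 * (N0 + e) = 2*N0 + 2*e from by ring, T_add (2*N0) (2*e),
      show 2*N0 = N0 + N0 from by ring, T_add N0 N0]
    have h3 := T_sq N0
    ring_nf
    ring_nf at h3
    omega

end TwoColorAux4


namespace TwoColorMain
open TwoColorAux TwoColorAux2 TwoColorAux3 TwoColorAux4

lemma card_le_sum_of_pos (π : Multiset ℕ) (h : ∀ i ∈ π, 0 < i) :
    Multiset.card π ≤ π.sum := by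
  induction π using Multiset.induction with
  | empty => simp
  | cons a s ih =>
      have h1 := h a (Multiset.mem_cons_self a s)
      have h2 := ih (fun i hi => h i (Multiset.mem_cons_of_mem hi))
      simp only [Multiset.card_cons, Multiset.sum_cons]
      omega

lemma map_half_double (a : Multiset ℕ) : (a.map (fun x => 2 * x)).map (· / 2) = a := by
  rw [Multiset.map_map, Multiset.map_congr rfl (g := id) ?_, Multiset.map_id]
  intro x _
  simp only [Function.comp_apply, id_eq]
  omega

lemma map_double_half (e : Multiset ℕ) (he : ∀ x ∈ e, Even x) :
    (e.map (· / 2)).map (fun x => 2 * x) = e := by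
  rw [Multiset.map_map, Multiset.map_congr rfl (g := id) ?_, Multiset.map_id]
  intro x hx
  have h2 := Nat.even_iff.mp (he x hx)
  simp only [Function.comp_apply, id_eq]
  omega

lemma sum_split (S : Multiset ℕ) :
    S.sum = 2 * (eSplit S).sum + (2 * (oSplit S).sum + Multiset.card (oSplit S)) := by
  conv_lhs => rw [← unsplit_split S]
  rw [sum_unsplit]

def fwdQuad (n : ℕ) (x : Multiset ℕ × Multiset ℕ) :
    Multiset ℕ × Multiset ℕ × Multiset ℕ × Multiset ℕ :=
  ((ofBeta (eSplit (toBeta (2*n) x.1))).map (fun x => 2 * x),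
   (ofBeta (oSplit (toBeta (2*n) x.1))).map (fun x => 2 * x),
   x.2,
   stair (kOf n (Multiset.card (eSplit (toBeta (2*n) x.1)))))

def bwdPair (n : ℕ) (t : Multiset ℕ × Multiset ℕ × Multiset ℕ × Multiset ℕ) :
    Multiset ℕ × Multiset ℕ :=
  (ofBeta (unsplit
      (toBeta (N0Of n (Multiset.card t.2.2.2)) (t.1.map (· / 2)))
      (toBeta (2*n - N0Of n (Multiset.card t.2.2.2)) (t.2.1.map (· / 2)))),
   t.2.2.1)

lemma fwd_main (n : ℕ) (x : Multiset ℕ × Multiset ℕ)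
    (hpos : ∀ i ∈ x.1, 0 < i) (hle : x.1.sum ≤ n) :
    (∀ i ∈ ofBeta (eSplit (toBeta (2*n) x.1)), 0 < i) ∧
    (∀ i ∈ ofBeta (oSplit (toBeta (2*n) x.1)), 0 < i) ∧
    2 * (ofBeta (eSplit (toBeta (2*n) x.1))).sum +
      2 * (ofBeta (oSplit (toBeta (2*n) x.1))).sum +
      (T (kOf n (Multiset.card (eSplit (toBeta (2*n) x.1)))) +
        kOf n (Multiset.card (eSplit (toBeta (2*n) x.1)))) = x.1.sum ∧
    bwdPair n (fwdQuad n x) = x := by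
  have hcard2n : Multiset.card x.1 ≤ 2*n :=
    le_trans (card_le_sum_of_pos x.1 hpos) (by omega)
  have hSnd : (toBeta (2*n) x.1).Nodup := nodup_toBeta _ _
  have hScard : Multiset.card (toBeta (2*n) x.1) = 2*n := card_toBeta _ _ hcard2n
  have hSsum : (toBeta (2*n) x.1).sum = x.1.sum + T (2*n) := sum_toBeta _ _ hcard2n
  have h0nd : (eSplit (toBeta (2*n) x.1)).Nodup := nodup_eSplit _ hSnd
  have h1nd : (oSplit (toBeta (2*n) x.1)).Nodup := nodup_oSplit _ hSnd
  have hc01 : Multiset.card (eSplit (toBeta (2*n) x.1)) +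
      Multiset.card (oSplit (toBeta (2*n) x.1)) = 2*n := by
    rw [card_split]; exact hScard
  have hsplitsum := sum_split (toBeta (2*n) x.1)
  have hasum := sum_ofBeta _ h0nd
  have hbsum := sum_ofBeta _ h1nd
  have hkey := key_sum n (Multiset.card (eSplit (toBeta (2*n) x.1)))
      (Multiset.card (oSplit (toBeta (2*n) x.1))) hc01
  refine ⟨pos_ofBeta _, pos_ofBeta _, by omega, ?_⟩
  -- roundtrip
  have hc0le : Multiset.card (eSplit (toBeta (2*n) x.1)) ≤ 2*n := by omega
  simp only [bwdPair, fwdQuad, card_stair]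
  rw [N0Of_kOf n _ hc0le, map_half_double, map_half_double,
    toBeta_ofBeta _ h0nd, show 2*n - Multiset.card (eSplit (toBeta (2*n) x.1)) =
      Multiset.card (oSplit (toBeta (2*n) x.1)) from by omega,
    toBeta_ofBeta _ h1nd, unsplit_split, ofBeta_toBeta _ _ hpos hcard2n]

lemma bwd_main (n : ℕ) (e1 e2 e3 : Multiset ℕ) (k : ℕ)
    (he1p : ∀ i ∈ e1, 0 < i) (he1e : ∀ i ∈ e1, Even i)
    (he2p : ∀ i ∈ e2, 0 < i) (he2e : ∀ i ∈ e2, Even i)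
    (hle : e1.sum + e2.sum + (stair k).sum ≤ n) :
    (∀ i ∈ (bwdPair n (e1, e2, e3, stair k)).1, 0 < i) ∧
    (bwdPair n (e1, e2, e3, stair k)).1.sum = e1.sum + e2.sum + (stair k).sum ∧
    fwdQuad n (bwdPair n (e1, e2, e3, stair k)) = (e1, e2, e3, stair k) := by
  have ha2 : (e1.map (· / 2)).map (fun x => 2 * x) = e1 := map_double_half e1 he1e
  have hb2 : (e2.map (· / 2)).map (fun x => 2 * x) = e2 := map_double_half e2 he2e
  have hsa : e1.sum = 2 * (e1.map (· / 2)).sum := by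
    conv_lhs => rw [← ha2]
    rw [sum_map_double]
  have hsb : e2.sum = 2 * (e2.map (· / 2)).sum := by
    conv_lhs => rw [← hb2]
    rw [sum_map_double]
  have hapos : ∀ i ∈ e1.map (· / 2), 0 < i := by
    intro i hi
    obtain ⟨y, hy, rfl⟩ := Multiset.mem_map.1 hi
    obtain ⟨r, hr⟩ := he1e y hy
    have := he1p y hy
    omega
  have hbpos : ∀ i ∈ e2.map (· / 2), 0 < i := by
    intro i hi
    obtain ⟨y, hy, rfl⟩ := Multiset.mem_map.1 hi
    obtain ⟨r, hr⟩ := he2e y hy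
    have := he2p y hy
    omega
  have hca : Multiset.card (e1.map (· / 2)) ≤ (e1.map (· / 2)).sum :=
    card_le_sum_of_pos _ hapos
  have hcb : Multiset.card (e2.map (· / 2)) ≤ (e2.map (· / 2)).sum :=
    card_le_sum_of_pos _ hbpos
  have hstsum : (stair k).sum = T k + k := sum_stair k
  have hN0a : N0Of n k ≤ 2*n ∧ Multiset.card (e1.map (· / 2)) ≤ N0Of n k ∧
      Multiset.card (e2.map (· / 2)) ≤ 2*n - N0Of n k ∧
      N0Of n k + (2*n - N0Of n k) = 2*n := by
    simp only [N0Of, Nat.odd_iff]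
    split_ifs <;> omega
  obtain ⟨hN0le, hcaN, hcbN, hNsum⟩ := hN0a
  have hS0c : Multiset.card (toBeta (N0Of n k) (e1.map (· / 2))) = N0Of n k :=
    card_toBeta _ _ hcaN
  have hS1c : Multiset.card (toBeta (2*n - N0Of n k) (e2.map (· / 2))) = 2*n - N0Of n k :=
    card_toBeta _ _ hcbN
  have hS0sum := sum_toBeta _ _ hcaN
  have hS1sum := sum_toBeta _ _ hcbN
  have hS0nd : (toBeta (N0Of n k) (e1.map (· / 2))).Nodup := nodup_toBeta _ _
  have hS1nd : (toBeta (2*n - N0Of n k) (e2.map (· / 2))).Nodup := nodup_toBeta _ _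
  have hSnd : (unsplit (toBeta (N0Of n k) (e1.map (· / 2)))
      (toBeta (2*n - N0Of n k) (e2.map (· / 2)))).Nodup :=
    nodup_unsplit _ _ hS0nd hS1nd
  have hScard : Multiset.card (unsplit (toBeta (N0Of n k) (e1.map (· / 2)))
      (toBeta (2*n - N0Of n k) (e2.map (· / 2)))) = 2*n := by
    rw [card_unsplit, hS0c, hS1c]; omega
  have hk' : kOf n (N0Of n k) = k := kOf_N0Of n k (by omega)
  have hkey := key_sum n (N0Of n k) (2*n - N0Of n k) (by omega)
  rw [hk'] at hkey
  have hSsum := sum_unsplit (toBeta (N0Of n k) (e1.map (· / 2)))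
      (toBeta (2*n - N0Of n k) (e2.map (· / 2)))
  have hofsum := sum_ofBeta _ hSnd
  rw [hScard] at hofsum
  have hπpos : ∀ i ∈ (bwdPair n (e1, e2, e3, stair k)).1, 0 < i := by
    simp only [bwdPair, card_stair]
    exact pos_ofBeta _
  refine ⟨hπpos, ?_, ?_⟩
  · simp only [bwdPair, card_stair]
    rw [hS1c] at hSsum
    omega
  · simp only [bwdPair, fwdQuad, card_stair]
    have htb : toBeta (2*n) (ofBeta (unsplit (toBeta (N0Of n k) (e1.map (· / 2)))
        (toBeta (2*n - N0Of n k) (e2.map (· / 2))))) =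
        unsplit (toBeta (N0Of n k) (e1.map (· / 2)))
          (toBeta (2*n - N0Of n k) (e2.map (· / 2))) := by
      have htb0 := toBeta_ofBeta _ hSnd
      rw [hScard] at htb0
      exact htb0
    rw [htb, eSplit_unsplit, oSplit_unsplit, hS0c, hk',
      ofBeta_toBeta _ _ hapos hcaN, ofBeta_toBeta _ _ hbpos hcbN, ha2, hb2]

end TwoColorMain

namespace TwoColorMain
open TwoColorAux TwoColorAux2 TwoColorAux3 TwoColorAux4

lemma fwd_pred (n : ℕ) (x : Multiset ℕ × Multiset ℕ)
    (hx : IsPartitionM x.1 ∧ IsEvenPartition x.2 ∧ x.1.sum + x.2.sum = n) :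
    IsEvenPartition (fwdQuad n x).1 ∧ IsEvenPartition (fwdQuad n x).2.1 ∧
    IsEvenPartition (fwdQuad n x).2.2.1 ∧ IsStaircase (fwdQuad n x).2.2.2 ∧
    (fwdQuad n x).1.sum + (fwdQuad n x).2.1.sum + (fwdQuad n x).2.2.1.sum +
      (fwdQuad n x).2.2.2.sum = n := by
  obtain ⟨hp, he, hs⟩ := hx
  obtain ⟨hmain1, hmain2, hmain3, -⟩ := fwd_main n x hp (by omega)
  simp only [fwdQuad]
  refine ⟨⟨?_, ?_⟩, ⟨?_, ?_⟩, he, ⟨_, rfl⟩, ?_⟩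
  · intro i hi
    obtain ⟨y, hy, rfl⟩ := Multiset.mem_map.1 hi
    have := hmain1 y hy
    omega
  · intro i hi
    obtain ⟨y, hy, rfl⟩ := Multiset.mem_map.1 hi
    exact ⟨y, by ring⟩
  · intro i hi
    obtain ⟨y, hy, rfl⟩ := Multiset.mem_map.1 hi
    have := hmain2 y hy
    omega
  · intro i hi
    obtain ⟨y, hy, rfl⟩ := Multiset.mem_map.1 hi
    exact ⟨y, by ring⟩
  · rw [sum_map_double, sum_map_double, sum_stair]
    omega

lemma bwd_pred (n : ℕ) (t : Multiset ℕ × Multiset ℕ × Multiset ℕ × Multiset ℕ)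
    (ht : IsEvenPartition t.1 ∧ IsEvenPartition t.2.1 ∧ IsEvenPartition t.2.2.1 ∧
      IsStaircase t.2.2.2 ∧
      t.1.sum + t.2.1.sum + t.2.2.1.sum + t.2.2.2.sum = n) :
    IsPartitionM (bwdPair n t).1 ∧ IsEvenPartition (bwdPair n t).2 ∧
      (bwdPair n t).1.sum + (bwdPair n t).2.sum = n := by
  obtain ⟨e1, e2, e3, st⟩ := t
  obtain ⟨he1, he2, he3, hst, hsum⟩ := ht
  obtain ⟨k, hk⟩ := hst
  simp only at hk hsum he1 he2 he3 ⊢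
  subst hk
  rw [show Multiset.map (fun x => x + 1) (Multiset.range k) = stair k from rfl] at hsum ⊢
  obtain ⟨hpos, hsum', -⟩ :=
    bwd_main n e1 e2 e3 k he1.1 he1.2 he2.1 he2.2 (by omega)
  have h2 : (bwdPair n (e1, e2, e3, stair k)).2 = e3 := rfl
  refine ⟨hpos, he3, ?_⟩
  rw [h2]
  omega

lemma fwd_bwd (n : ℕ) (t : Multiset ℕ × Multiset ℕ × Multiset ℕ × Multiset ℕ)
    (ht : IsEvenPartition t.1 ∧ IsEvenPartition t.2.1 ∧ IsEvenPartition t.2.2.1 ∧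
      IsStaircase t.2.2.2 ∧
      t.1.sum + t.2.1.sum + t.2.2.1.sum + t.2.2.2.sum = n) :
    fwdQuad n (bwdPair n t) = t := by
  obtain ⟨e1, e2, e3, st⟩ := t
  obtain ⟨he1, he2, he3, hst, hsum⟩ := ht
  obtain ⟨k, hk⟩ := hst
  simp only at hk hsum he1 he2 he3 ⊢
  subst hk
  rw [show Multiset.map (fun x => x + 1) (Multiset.range k) = stair k from rfl] at hsum ⊢
  exact (bwd_main n e1 e2 e3 k he1.1 he1.2 he2.1 he2.2 (by omega)).2.2

end TwoColorMain

theorem two_color_bijection (n : ℕ) :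
    Nonempty ({x : Multiset ℕ × Multiset ℕ //
        IsPartitionM x.1 ∧ IsEvenPartition x.2 ∧ x.1.sum + x.2.sum = n} ≃
      {t : Multiset ℕ × Multiset ℕ × Multiset ℕ × Multiset ℕ //
        IsEvenPartition t.1 ∧ IsEvenPartition t.2.1 ∧ IsEvenPartition t.2.2.1 ∧
        IsStaircase t.2.2.2 ∧
        t.1.sum + t.2.1.sum + t.2.2.1.sum + t.2.2.2.sum = n}) := by
  exact ⟨{
    toFun := fun x => ⟨TwoColorMain.fwdQuad n x.1, TwoColorMain.fwd_pred n x.1 x.2⟩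
    invFun := fun t => ⟨TwoColorMain.bwdPair n t.1, TwoColorMain.bwd_pred n t.1 t.2⟩
    left_inv := by
      rintro ⟨x, hp, he, hs⟩
      exact Subtype.ext (TwoColorMain.fwd_main n x hp (by omega)).2.2.2
    right_inv := by
      intro t
      exact Subtype.ext (TwoColorMain.fwd_bwd n t.1 t.2) }⟩
end

section
/- The number of pairs (λ¹, λ²) of partitions into distinct odd parts with |λ¹| + |λ²| = n equals the number of pairs (π, Δ) where π is a partition into even parts, Δ is either empty, a partition of the form (2m−1, 2m−3, ..., 3, 1) for some m ≥ 1, or such a partition with the part 1 overlined, and |π| + |Δ| = n. -/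
namespace MW

/-- subtract index from each element -/
def stList (l : List ℕ) : List ℕ := l.zipWith (fun a i => a - i) (List.range l.length)
/-- add index to each element -/
def unstList (l : List ℕ) : List ℕ := l.zipWith (fun a i => a + i) (List.range l.length)

@[simp] lemma stList_length (l : List ℕ) : (stList l).length = l.length := by
  simp [stList]
@[simp] lemma unstList_length (l : List ℕ) : (unstList l).length = l.length := by
  simp [unstList]

lemma stList_getElem (l : List ℕ) (i : ℕ) (h : i < (stList l).length) :
    (stList l)[i] = l[i]'(by simpa using h) - i := by
  simp [stList]
lemma unstList_getElem (l : List ℕ) (i : ℕ) (h : i < (unstList l).length) :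
    (unstList l)[i] = l[i]'(by simpa using h) + i := by
  simp [unstList]

lemma sorted_getElem_add_le (l : List ℕ) (hl : l.Pairwise (· < ·)) :
    ∀ (i k : ℕ) (h : i + k < l.length), l[i]'(by omega) + k ≤ l[i+k] := by
  intro i k
  induction k with
  | zero => simp
  | succ k ih =>
    intro h
    have h1 : i + k < l.length := by omega
    have := ih h1
    have h2 : l[i+k] < l[i+(k+1)]'h :=
      List.pairwise_iff_getElem.mp hl (i+k) (i+(k+1)) h1 h (by omega)
    omega

lemma sorted_getElem_mono (l : List ℕ) (hl : l.Pairwise (· < ·)) (i j : ℕ) (hij : i ≤ j)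
    (hj : j < l.length) : l[i]'(by omega) + (j - i) ≤ l[j] := by
  obtain ⟨k, rfl⟩ : ∃ k, j = i + k := ⟨j - i, by omega⟩
  have := sorted_getElem_add_le l hl i k hj
  have hk : i + k - i = k := by omega
  rw [hk]
  exact this

lemma sorted_le_getElem (l : List ℕ) (hl : l.Pairwise (· < ·)) (i : ℕ) (h : i < l.length) :
    i ≤ l[i] := by
  have := sorted_getElem_mono l hl 0 i (by omega) h
  omega

lemma stList_sorted (l : List ℕ) (hl : l.Pairwise (· < ·)) : (stList l).Pairwise (· ≤ ·) := by
  rw [List.pairwise_iff_getElem]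
  intro i j hi hj hij
  rw [stList_getElem _ _ hi, stList_getElem _ _ hj]
  have := sorted_getElem_mono l hl i j (by omega) (by simpa using hj)
  omega

lemma unstList_sorted (l : List ℕ) (hl : l.Pairwise (· ≤ ·)) : (unstList l).Pairwise (· < ·) := by
  rw [List.pairwise_iff_getElem]
  intro i j hi hj hij
  rw [unstList_getElem _ _ hi, unstList_getElem _ _ hj]
  have := List.pairwise_iff_getElem.mp hl i j (by simpa using hi) (by simpa using hj) hij
  omega

lemma unstList_stList (l : List ℕ) (hl : l.Pairwise (· < ·)) : unstList (stList l) = l := by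
  apply List.ext_getElem (by simp)
  intro i h1 h2
  rw [unstList_getElem _ _ (by simpa using h2), stList_getElem _ _ (by simpa using h2)]
  have := sorted_le_getElem l hl i h2
  omega

lemma stList_unstList (l : List ℕ) : stList (unstList l) = l := by
  apply List.ext_getElem (by simp)
  intro i h1 h2
  rw [stList_getElem _ _ (by simpa using h2), unstList_getElem _ _ (by simpa using h2)]
  omega

lemma zipWith_add_sum : ∀ (l r : List ℕ), l.length = r.length →
    (List.zipWith (· + ·) l r).sum = l.sum + r.sum
  | [], [], _ => by simp
  | [], _ :: _, h => by simp at h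
  | _ :: _, [], h => by simp at h
  | a :: l, b :: r, h => by
    simp only [List.zipWith_cons_cons, List.sum_cons]
    rw [zipWith_add_sum l r (by simpa using h)]
    ring

lemma list_range_sum (n : ℕ) : (List.range n).sum = ∑ i ∈ Finset.range n, i := by
  rw [show (List.range n).sum = ((List.range n).map id).sum by simp]
  rfl

lemma range_sum_two (n : ℕ) : (List.range n).sum * 2 = n * (n - 1) := by
  rw [list_range_sum, Finset.sum_range_id_mul_two]

lemma unstList_sum (l : List ℕ) : (unstList l).sum = l.sum + (List.range l.length).sum := by
  have : unstList l = List.zipWith (· + ·) l (List.range l.length) := rfl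
  rw [this, zipWith_add_sum _ _ (by simp)]



def defl (x : Multiset ℕ) : Multiset ℕ := ↑(stList ((x.sort (· ≤ ·)).map (· / 2)))
def infl (M : Multiset ℕ) : Multiset ℕ := ↑((unstList (M.sort (· ≤ ·))).map (fun u => 2*u+1))

lemma sort_coe_of_sorted (l : List ℕ) (h : l.Pairwise (· ≤ ·)) :
    Multiset.sort (↑l : Multiset ℕ) (· ≤ ·) = l := by
  apply List.Perm.eq_of_pairwise' (Multiset.pairwise_sort _ _) h
  rw [← Multiset.coe_eq_coe, Multiset.sort_eq]

@[simp] lemma card_defl (x : Multiset ℕ) : (defl x).card = x.card := by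
  simp [defl, stList_length]

@[simp] lemma card_infl (M : Multiset ℕ) : (infl M).card = M.card := by
  simp [infl, unstList_length]

lemma sorted_lt_of_distinctOdd {x : Multiset ℕ} (h : IsDistinctOdd x) :
    (x.sort (· ≤ ·)).Pairwise (· < ·) := by
  apply List.Pairwise.imp (fun h => lt_of_le_of_ne h.1 h.2) ((Multiset.pairwise_sort _ _).and ?_)
  have : (↑(x.sort (· ≤ ·)) : Multiset ℕ).Nodup := by rw [Multiset.sort_eq]; exact h.1
  exact this

lemma halves_sorted {x : Multiset ℕ} (h : IsDistinctOdd x) :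
    ((x.sort (· ≤ ·)).map (· / 2)).Pairwise (· < ·) := by
  rw [List.pairwise_map]
  have hs := sorted_lt_of_distinctOdd h
  refine List.Pairwise.imp_of_mem ?_ hs
  intro a b ha hb hab
  have hoa : Odd a := h.2 a (by rw [← Multiset.sort_eq x (· ≤ ·)]; exact Multiset.mem_coe.mpr ha)
  have hob : Odd b := h.2 b (by rw [← Multiset.sort_eq x (· ≤ ·)]; exact Multiset.mem_coe.mpr hb)
  obtain ⟨p, rfl⟩ := hoa; obtain ⟨q, rfl⟩ := hob
  omega

lemma infl_isDistinctOdd (M : Multiset ℕ) : IsDistinctOdd (infl M) := by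
  have hu := unstList_sorted _ (Multiset.pairwise_sort M (· ≤ ·))
  have hs : ((unstList (M.sort (· ≤ ·))).map (fun u => 2*u+1)).Pairwise (· < ·) := by
    rw [List.pairwise_map]
    exact hu.imp (by intro a b hab; omega)
  constructor
  · exact Multiset.coe_nodup.mpr hs.nodup
  · intro i hi
    simp only [infl, Multiset.mem_coe, List.mem_map] at hi
    obtain ⟨u, _, rfl⟩ := hi
    exact ⟨u, by ring⟩

lemma map_two_mul_add_one_sum (l : List ℕ) :
    (l.map (fun u => 2*u+1)).sum = 2 * l.sum + l.length := by
  induction l with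
  | nil => simp
  | cons a l ih => simp [ih]; ring

lemma infl_sum (M : Multiset ℕ) : (infl M).sum = 2 * M.sum + M.card * M.card := by
  have hlen : (M.sort (· ≤ ·)).length = M.card := Multiset.length_sort _
  have hsum : (M.sort (· ≤ ·)).sum = M.sum := by
    rw [← Multiset.sum_coe, Multiset.sort_eq]
  simp only [infl, Multiset.sum_coe, map_two_mul_add_one_sum, unstList_sum, unstList_length, hlen, hsum]
  have := range_sum_two M.card
  set c := M.card
  have : (List.range c).sum * 2 + c = c * c := by rw [range_sum_two]; cases c <;> simp <;> ring_nf <;> omega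
  omega

lemma infl_defl {x : Multiset ℕ} (h : IsDistinctOdd x) : infl (defl x) = x := by
  have hs := sorted_lt_of_distinctOdd h
  have hh := halves_sorted h
  have hst := stList_sorted _ hh
  unfold infl defl
  rw [sort_coe_of_sorted _ hst, unstList_stList _ hh, List.map_map]
  have : ∀ v ∈ x.sort (· ≤ ·), ((fun u => 2*u+1) ∘ (· / 2)) v = id v := by
    intro v hv
    have : Odd v := h.2 v (by rw [← Multiset.sort_eq x (· ≤ ·)]; exact Multiset.mem_coe.mpr hv)
    obtain ⟨p, rfl⟩ := this; simp; omega
  rw [List.map_congr_left this, List.map_id]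
  exact Multiset.sort_eq _ _

lemma defl_infl (M : Multiset ℕ) : defl (infl M) = M := by
  have hu := unstList_sorted _ (Multiset.pairwise_sort M (· ≤ ·))
  have ht : ((unstList (M.sort (· ≤ ·))).map (fun u => 2*u+1)).Pairwise (· ≤ ·) := by
    apply List.Pairwise.imp le_of_lt
    rw [List.pairwise_map]
    exact hu.imp (by intro a b hab; omega)
  unfold defl infl
  rw [sort_coe_of_sorted _ ht, List.map_map]
  have : ∀ v ∈ unstList (M.sort (· ≤ ·)), ((· / 2) ∘ fun u => 2*u+1) v = id v := by
    intro v _; simp; omega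
  rw [List.map_congr_left this, List.map_id, stList_unstList]
  exact Multiset.sort_eq _ _

lemma defl_sum {x : Multiset ℕ} (h : IsDistinctOdd x) :
    x.sum = 2 * (defl x).sum + x.card * x.card := by
  conv_lhs => rw [← infl_defl h]
  rw [infl_sum, card_defl]

/-- number of parts greater than k -/
def cnt (A : Multiset ℕ) (k : ℕ) : ℕ := (A.filter (fun x => k < x)).card

/-- conjugate partition -/
def conj (A : Multiset ℕ) : Multiset ℕ := (Multiset.range A.sup).map (cnt A)

lemma cnt_zero (k : ℕ) : cnt 0 k = 0 := rfl

lemma cnt_cons (a : ℕ) (A : Multiset ℕ) (k : ℕ) :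
    cnt (a ::ₘ A) k = cnt A k + (if k < a then 1 else 0) := by
  unfold cnt
  by_cases h : k < a
  · rw [Multiset.filter_cons_of_pos _ h]; simp [h]
  · rw [Multiset.filter_cons_of_neg _ h]; simp [h]

lemma cnt_add (A B : Multiset ℕ) (k : ℕ) : cnt (A + B) k = cnt A k + cnt B k := by
  unfold cnt; rw [Multiset.filter_add, Multiset.card_add]

lemma cnt_antitone (A : Multiset ℕ) {j k : ℕ} (h : j ≤ k) : cnt A k ≤ cnt A j := by
  apply Multiset.card_le_card
  apply Multiset.monotone_filter_right
  intro x hx; omega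

lemma cnt_le_card (A : Multiset ℕ) (k : ℕ) : cnt A k ≤ A.card :=
  Multiset.card_le_card (Multiset.filter_le _ _)

lemma cnt_eq_zero_of_sup_le (A : Multiset ℕ) {k : ℕ} (h : A.sup ≤ k) : cnt A k = 0 := by
  unfold cnt
  rw [Multiset.card_eq_zero, Multiset.filter_eq_nil]
  intro a ha
  have := Multiset.le_sup ha
  omega

lemma exists_gt_of_lt_sup (A : Multiset ℕ) {k : ℕ} (h : k < A.sup) : ∃ x ∈ A, k < x := by
  by_contra hc
  push_neg at hc
  have : A.sup ≤ k := Multiset.sup_le.mpr fun b hb => hc b hb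
  omega

lemma cnt_pos_of_lt_sup (A : Multiset ℕ) {k : ℕ} (h : k < A.sup) : 0 < cnt A k := by
  obtain ⟨x, hx, hkx⟩ := exists_gt_of_lt_sup A h
  unfold cnt
  rw [Multiset.card_pos]
  intro h0
  have : x ∈ A.filter (fun x => k < x) := Multiset.mem_filter.mpr ⟨hx, hkx⟩
  rw [h0] at this
  simp at this

@[simp] lemma card_conj (A : Multiset ℕ) : (conj A).card = A.sup := by
  simp [conj]

lemma conj_pos (A : Multiset ℕ) : ∀ y ∈ conj A, 0 < y := by
  intro y hy
  simp only [conj, Multiset.mem_map, Multiset.mem_range] at hy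
  obtain ⟨k, hk, rfl⟩ := hy
  exact cnt_pos_of_lt_sup A hk

lemma conj_le (A : Multiset ℕ) : ∀ y ∈ conj A, y ≤ A.card := by
  intro y hy
  simp only [conj, Multiset.mem_map, Multiset.mem_range] at hy
  obtain ⟨k, _, rfl⟩ := hy
  exact cnt_le_card A k

/-- summing cnt over a range recovers the sum -/
lemma sum_cnt_range (A : Multiset ℕ) : ∀ N, (∀ x ∈ A, x ≤ N) →
    ∑ k ∈ Finset.range N, cnt A k = A.sum := by
  induction A using Multiset.induction with
  | empty => intro N _; simp [cnt_zero]
  | cons a A ih =>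
    intro N hN
    have hsum : ∑ k ∈ Finset.range N, cnt (a ::ₘ A) k
        = (∑ k ∈ Finset.range N, cnt A k) + ∑ k ∈ Finset.range N, (if k < a then 1 else 0) := by
      rw [← Finset.sum_add_distrib]
      exact Finset.sum_congr rfl fun k _ => cnt_cons a A k
    rw [hsum, ih N (fun x hx => hN x (Multiset.mem_cons_of_mem hx))]
    have ha : a ≤ N := hN a (Multiset.mem_cons_self a A)
    have : ∑ k ∈ Finset.range N, (if k < a then 1 else 0) = a := by
      rw [← Finset.card_filter]
      have : (Finset.range N).filter (fun k => k < a) = Finset.range a := by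
        ext k; simp; omega
      simp [this]
    rw [this, Multiset.sum_cons]
    omega

lemma conj_sum (A : Multiset ℕ) : (conj A).sum = A.sum := by
  have : (conj A).sum = ∑ k ∈ Finset.range A.sup, cnt A k := rfl
  rw [this, sum_cnt_range A A.sup (fun x hx => Multiset.le_sup hx)]

/-- cnt of conj as a filtered range card -/
lemma cnt_conj_eq (A : Multiset ℕ) (j : ℕ) :
    cnt (conj A) j = ((Finset.range A.sup).filter (fun k => j < cnt A k)).card := by
  unfold cnt conj
  rw [Multiset.filter_map, Multiset.card_map]
  rfl

/-- key duality -/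
lemma key (A : Multiset ℕ) (j k : ℕ) : k < cnt A j ↔ j < cnt (conj A) k := by
  rw [cnt_conj_eq]
  set S := (Finset.range A.sup).filter (fun l => k < cnt A l) with hS
  constructor
  · intro h
    have hsub : Finset.range (j + 1) ⊆ S := by
      intro l hl
      simp only [Finset.mem_range] at hl
      have h1 : k < cnt A l := lt_of_lt_of_le h (cnt_antitone A (by omega))
      have h2 : l < A.sup := by
        by_contra hc
        push_neg at hc
        rw [cnt_eq_zero_of_sup_le A hc] at h1
        omega
      simp [hS, h1, h2]
    calc j < j + 1 := by omega
    _ = (Finset.range (j+1)).card := by simp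
    _ ≤ S.card := Finset.card_le_card hsub
  · intro h
    by_contra hc
    push_neg at hc
    have hsub : S ⊆ Finset.range j := by
      intro l hl
      simp only [hS, Finset.mem_filter, Finset.mem_range] at hl
      simp only [Finset.mem_range]
      by_contra hlj
      push_neg at hlj
      have := cnt_antitone A hlj
      omega
    have := Finset.card_le_card hsub
    simp at this
    omega

lemma cnt_conj_conj (A : Multiset ℕ) (j : ℕ) : cnt (conj (conj A)) j = cnt A j := by
  have h : ∀ k, k < cnt (conj (conj A)) j ↔ k < cnt A j := by
    intro k
    rw [← key (conj A) k j, ← key A j k]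
  by_contra hc
  rcases Nat.lt_or_ge (cnt (conj (conj A)) j) (cnt A j) with h1 | h1
  · have := (h (cnt (conj (conj A)) j)).mpr h1
    omega
  · have h2 : cnt A j < cnt (conj (conj A)) j := by omega
    have := (h (cnt A j)).mp h2
    omega

lemma cnt_filter_pos (A : Multiset ℕ) (j : ℕ) : cnt (A.filter (fun x => 0 < x)) j = cnt A j := by
  unfold cnt
  rw [Multiset.filter_filter]
  congr 1
  apply Multiset.filter_congr
  intro x _
  constructor
  · intro h; omega
  · intro h; omega

/-- multisets of positive naturals are determined by their cnt function -/
lemma eq_of_cnt_eq {A B : Multiset ℕ} (hA : ∀ x ∈ A, 0 < x) (hB : ∀ x ∈ B, 0 < x)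
    (h : ∀ j, cnt A j = cnt B j) : A = B := by
  ext v
  cases v with
  | zero =>
    have h1 : A.count 0 = 0 := Multiset.count_eq_zero.mpr (fun hc => by have := hA 0 hc; omega)
    have h2 : B.count 0 = 0 := Multiset.count_eq_zero.mpr (fun hc => by have := hB 0 hc; omega)
    omega
  | succ v =>
    have key2 : ∀ (C : Multiset ℕ), cnt C v = C.count (v+1) + cnt C (v+1) := by
      intro C
      unfold cnt
      have hsplit : C.filter (fun x => x = v + 1) + C.filter (fun x => v + 1 < x)
          = C.filter (fun x => v < x) := by
        rw [Multiset.filter_add_filter]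
        have h1 : C.filter (fun x => x = v+1 ∨ v+1 < x) = C.filter (fun x => v < x) :=
          Multiset.filter_congr (by intro x _; constructor <;> (intro; omega))
        have h2 : C.filter (fun x => x = v+1 ∧ v+1 < x) = 0 := by
          rw [Multiset.filter_eq_nil]; intro a _; omega
        rw [h1, h2, add_zero]
      have hcard := congrArg Multiset.card hsplit
      rw [Multiset.card_add] at hcard
      have hrep : C.filter (fun x => x = v + 1) = Multiset.replicate (C.count (v+1)) (v+1) :=
        Multiset.filter_eq' C (v+1)
      rw [hrep, Multiset.card_replicate] at hcard
      show (C.filter (fun x => v < x)).card = C.count (v+1) + (C.filter (fun x => v+1 < x)).card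
      omega
    have e1 := key2 A
    have e2 := key2 B
    have := h v
    have := h (v+1)
    omega

lemma conj_conj (A : Multiset ℕ) : conj (conj A) = A.filter (fun x => 0 < x) := by
  apply eq_of_cnt_eq (conj_pos _) (fun x hx => (Multiset.mem_filter.mp hx).2)
  intro j
  rw [cnt_conj_conj, cnt_filter_pos]

lemma sup_le_iff' (A : Multiset ℕ) (c : ℕ) (h : ∀ x ∈ A, x ≤ c) : A.sup ≤ c :=
  Multiset.sup_le.mpr h

lemma conj_add_replicate_zero (A : Multiset ℕ) (k : ℕ) :
    conj (A + Multiset.replicate k 0) = conj A := by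
  have hsup : (A + Multiset.replicate k 0).sup = A.sup := by
    rw [Multiset.sup_add]
    have : (Multiset.replicate k 0).sup = 0 := by
      apply le_antisymm _ (Nat.zero_le _)
      apply Multiset.sup_le.mpr
      intro b hb
      rw [Multiset.eq_of_mem_replicate hb]
    rw [this]
    simp
  have hcnt : ∀ j, cnt (A + Multiset.replicate k 0) j = cnt A j := by
    intro j
    rw [cnt_add]
    have : cnt (Multiset.replicate k 0) j = 0 := by
      unfold cnt
      rw [Multiset.card_eq_zero, Multiset.filter_eq_nil]
      intro a ha
      rw [Multiset.eq_of_mem_replicate ha]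
      omega
    omega
  unfold conj
  rw [hsup]
  exact Multiset.map_congr rfl fun k hk => hcnt k


/-- number of parts ≥ k -/
def gce (A : Multiset ℕ) (k : ℕ) : ℕ := (A.filter (fun x => k ≤ x)).card

lemma gce_succ (A : Multiset ℕ) (k : ℕ) : gce A (k+1) = cnt A k :=
  congrArg Multiset.card (Multiset.filter_congr (by intro x _; omega))

lemma gce_antitone (A : Multiset ℕ) {j k : ℕ} (h : j ≤ k) : gce A k ≤ gce A j := by
  apply Multiset.card_le_card
  apply Multiset.monotone_filter_right
  intro x hx; omega

lemma gce_le_card (A : Multiset ℕ) (k : ℕ) : gce A k ≤ A.card :=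
  Multiset.card_le_card (Multiset.filter_le _ _)

lemma gce_add (A B : Multiset ℕ) (k : ℕ) : gce (A + B) k = gce A k + gce B k := by
  unfold gce; rw [Multiset.filter_add, Multiset.card_add]

lemma gce_split (A : Multiset ℕ) (c : ℕ) : gce A c = A.count c + cnt A c := by
  have hsplit : A.filter (fun x => x = c) + A.filter (fun x => c < x)
      = A.filter (fun x => c ≤ x) := by
    rw [Multiset.filter_add_filter]
    have h1 : A.filter (fun x => x = c ∨ c < x) = A.filter (fun x => c ≤ x) :=
      Multiset.filter_congr (by intro x _; constructor <;> (intro; omega))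
    have h2 : A.filter (fun x => x = c ∧ c < x) = 0 := by
      rw [Multiset.filter_eq_nil]; intro a _; omega
    rw [h1, h2, add_zero]
  have hcard := congrArg Multiset.card hsplit
  rw [Multiset.card_add] at hcard
  rw [Multiset.filter_eq' A c, Multiset.card_replicate] at hcard
  unfold gce cnt
  omega

/-- size of Durfee rectangle of shape (b+m) × b -/
def bOf (m : ℕ) (π : Multiset ℕ) : ℕ :=
  Nat.findGreatest (fun k => k ≤ gce π (k+m)) π.card

lemma bOf_le (m : ℕ) (π : Multiset ℕ) : bOf m π ≤ π.card := Nat.findGreatest_le _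

lemma bOf_spec (m : ℕ) (π : Multiset ℕ) : bOf m π ≤ gce π (bOf m π + m) :=
  Nat.findGreatest_spec (P := fun k => k ≤ gce π (k+m)) (Nat.zero_le _) (Nat.zero_le _)

lemma bOf_not_succ (m : ℕ) (π : Multiset ℕ) : ¬ (bOf m π + 1 ≤ gce π (bOf m π + 1 + m)) := by
  intro hc
  rcases Nat.lt_or_ge π.card (bOf m π + 1) with h | h
  · have := gce_le_card π (bOf m π + 1 + m)
    have := bOf_le m π
    omega
  · exact (Nat.findGreatest_eq_iff.mp (rfl : bOf m π = bOf m π)).2.2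
      (Nat.lt_succ_self _) h hc

lemma bOf_eq (m : ℕ) (π : Multiset ℕ) {b : ℕ} (hb : b ≤ π.card)
    (h1 : b ≤ gce π (b + m)) (h2 : ¬ (b + 1 ≤ gce π (b + 1 + m))) : bOf m π = b := by
  rw [bOf, Nat.findGreatest_eq_iff]
  refine ⟨hb, fun _ => h1, ?_⟩
  intro k hk hkc hPk
  -- p k with k > b implies p (b+1)
  have : b + 1 ≤ gce π (b + 1 + m) := by
    calc b + 1 ≤ k := hk
    _ ≤ gce π (k + m) := hPk
    _ ≤ gce π (b + 1 + m) := gce_antitone π (by omega)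
  exact h2 this

/-- the Durfee assembly map -/
def durf (m b : ℕ) (P Q : Multiset ℕ) : Multiset ℕ := Q.map (· + (b+m)) + conj P

/-- recover the top rectangle+right part -/
def recTop (m : ℕ) (π : Multiset ℕ) : Multiset ℕ :=
  π.filter (fun x => bOf m π + m < x)
    + Multiset.replicate (bOf m π - cnt π (bOf m π + m)) (bOf m π + m)

/-- inverse of durf -/
def undurf (m : ℕ) (π : Multiset ℕ) : ℕ × Multiset ℕ × Multiset ℕ :=
  (bOf m π,
   conj (π - recTop m π) + Multiset.replicate (bOf m π + m - (conj (π - recTop m π)).card) 0,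
   (recTop m π).map (· - (bOf m π + m)))

lemma durf_partition (m b : ℕ) (P Q : Multiset ℕ) (hQ : Q.card = b) :
    IsPartitionM (durf m b P Q) := by
  intro i hi
  rw [durf, Multiset.mem_add] at hi
  rcases hi with hi | hi
  · obtain ⟨q, hq, rfl⟩ := Multiset.mem_map.mp hi
    have : Q ≠ 0 := by rintro rfl; simp at hq
    have : 0 < b := by
      rw [← hQ]; exact Multiset.card_pos.mpr this
    omega
  · exact conj_pos P i hi

lemma map_add_sum (Q : Multiset ℕ) (c : ℕ) : (Q.map (· + c)).sum = Q.sum + Q.card * c := by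
  induction Q using Multiset.induction with
  | empty => simp
  | cons a Q ih => simp [ih]; ring

lemma durf_sum (m b : ℕ) (P Q : Multiset ℕ) (hQ : Q.card = b) :
    (durf m b P Q).sum = b * (b + m) + P.sum + Q.sum := by
  rw [durf, Multiset.sum_add, map_add_sum, conj_sum, hQ]
  ring

lemma durf_card (m b : ℕ) (P Q : Multiset ℕ) :
    (durf m b P Q).card = Q.card + P.sup := by
  rw [durf, Multiset.card_add, Multiset.card_map, card_conj]

lemma bOf_durf (m b : ℕ) (P Q : Multiset ℕ) (hP : P.card = b + m) (hQ : Q.card = b) :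
    bOf m (durf m b P Q) = b := by
  set c := b + m with hc
  set X := Q.map (· + c) with hX
  set Y := conj P with hY
  have hXc : ∀ x ∈ X, c ≤ x := by
    intro x hx; obtain ⟨q, _, rfl⟩ := Multiset.mem_map.mp hx; omega
  have hYc : ∀ y ∈ Y, y ≤ c := by
    intro y hy; have := conj_le P y hy; omega
  have hXcard : X.card = b := by rw [hX, Multiset.card_map, hQ]
  apply bOf_eq
  · rw [durf, Multiset.card_add, Multiset.card_map, hQ]; omega
  · -- b ≤ gce π (b+m)
    have h1 : gce X c = b := by
      rw [← hXcard]
      unfold gce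
      congr 1
      rw [Multiset.filter_eq_self]
      exact hXc
    rw [durf, gce_add]
    rw [← hX, ← hY, ← hc, h1]
    omega
  · -- ¬ (b+1 ≤ gce π (b+1+m))
    intro hcon
    have he : b + 1 + m = c + 1 := by omega
    rw [durf, gce_add, ← hX, ← hY, he, gce_succ, gce_succ] at hcon
    have h2 : cnt Y c = 0 := by
      unfold cnt
      rw [Multiset.card_eq_zero, Multiset.filter_eq_nil]
      intro a ha
      have := hYc a ha
      omega
    have h3 : cnt X c ≤ b := by rw [← hXcard]; exact cnt_le_card X c
    omega

lemma recTop_eq (m b : ℕ) (X Y : Multiset ℕ) (hb : bOf m (X + Y) = b)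
    (hXc : ∀ x ∈ X, b + m ≤ x) (hYc : ∀ y ∈ Y, y ≤ b + m) (hXcard : X.card = b) :
    recTop m (X + Y) = X := by
  set c := b + m with hc
  unfold recTop
  rw [hb]
  have h1 : (X + Y).filter (fun x => c < x) = X.filter (fun x => c < x) := by
    rw [Multiset.filter_add]
    have : Y.filter (fun x => c < x) = 0 := by
      rw [Multiset.filter_eq_nil]
      intro a ha; have := hYc a ha; omega
    rw [this, add_zero]
  have h2 : cnt (X + Y) c = cnt X c := by
    rw [cnt_add]
    have : cnt Y c = 0 := by
      unfold cnt
      rw [Multiset.card_eq_zero, Multiset.filter_eq_nil]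
      intro a ha; have := hYc a ha; omega
    omega
  rw [h1, h2]
  have h3 : X.filter (fun x => ¬ c < x) = Multiset.replicate (b - cnt X c) c := by
    have hall : ∀ x ∈ X.filter (fun x => ¬ c < x), x = c := by
      intro x hx
      rw [Multiset.mem_filter] at hx
      have := hXc x hx.1
      have := hx.2
      omega
    have hcard : (X.filter (fun x => ¬ c < x)).card = b - cnt X c := by
      have := Multiset.filter_add_not (fun x => c < x) X
      have hc2 := congrArg Multiset.card this
      rw [Multiset.card_add] at hc2
      have : cnt X c ≤ b := by rw [← hXcard]; exact cnt_le_card X c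
      unfold cnt at *
      omega
    rw [← hcard]
    exact (Multiset.eq_replicate_card).mpr hall
  rw [← h3]
  exact Multiset.filter_add_not _ X

lemma undurf_durf (m b : ℕ) (P Q : Multiset ℕ) (hP : P.card = b + m) (hQ : Q.card = b) :
    undurf m (durf m b P Q) = (b, P, Q) := by
  set c := b + m with hc
  set X := Q.map (· + c) with hX
  set Y := conj P with hY
  have hXc : ∀ x ∈ X, c ≤ x := by
    intro x hx; obtain ⟨q, _, rfl⟩ := Multiset.mem_map.mp hx; omega
  have hYc : ∀ y ∈ Y, y ≤ c := by
    intro y hy; have := conj_le P y hy; omega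
  have hXcard : X.card = b := by rw [hX, Multiset.card_map, hQ]
  have hdurf : durf m b P Q = X + Y := rfl
  have hb : bOf m (X + Y) = b := by rw [← hdurf]; exact bOf_durf m b P Q hP hQ
  have hrec : recTop m (X + Y) = X := recTop_eq m b X Y hb hXc hYc hXcard
  unfold undurf
  rw [hdurf, hrec, hb]
  have hsub : X + Y - X = Y := add_tsub_cancel_left X Y
  rw [hsub]
  refine Prod.ext rfl (Prod.ext ?_ ?_)
  · -- conj Y + replicate ... = P
    show conj Y + Multiset.replicate (b + m - (conj Y).card) 0 = P
    rw [hY, conj_conj]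
    have hfs : P.filter (fun x => ¬ 0 < x) = Multiset.replicate (b + m - (P.filter (fun x => 0 < x)).card) 0 := by
      have hall : ∀ x ∈ P.filter (fun x => ¬ 0 < x), x = 0 := by
        intro x hx
        rw [Multiset.mem_filter] at hx
        omega
      have hcard : (P.filter (fun x => ¬ 0 < x)).card = b + m - (P.filter (fun x => 0 < x)).card := by
        have := congrArg Multiset.card (Multiset.filter_add_not (fun x => 0 < x) P)
        rw [Multiset.card_add, hP] at this
        omega
      rw [← hcard]
      exact (Multiset.eq_replicate_card).mpr hall
    rw [← hfs]
    exact Multiset.filter_add_not _ P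
  · -- X.map (· - c) = Q
    show X.map (· - c) = Q
    rw [hX, Multiset.map_map]
    have : ∀ q ∈ Q, ((· - c) ∘ (· + c)) q = id q := by intro q _; simp
    rw [Multiset.map_congr rfl this, Multiset.map_id]

lemma undurf_spec (m : ℕ) (π : Multiset ℕ) (hπ : IsPartitionM π) :
    (undurf m π).2.1.card = (undurf m π).1 + m ∧
    (undurf m π).2.2.card = (undurf m π).1 ∧
    durf m (undurf m π).1 (undurf m π).2.1 (undurf m π).2.2 = π := by
  set b := bOf m π with hb
  set c := b + m with hc
  have hcnt : cnt π c ≤ b := by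
    have h1 := bOf_not_succ m π
    rw [← hb] at h1
    have h2 : gce π (b + 1 + m) = cnt π c := by
      rw [show b + 1 + m = c + 1 by omega, gce_succ]
    omega
  have hgce : b ≤ gce π c := by
    have := bOf_spec m π
    rw [← hb] at this
    exact this
  set X := recTop m π with hX
  have hXeq : X = π.filter (fun x => c < x) + Multiset.replicate (b - cnt π c) c := rfl
  have hXcard : X.card = b := by
    rw [hXeq, Multiset.card_add, Multiset.card_replicate]
    show cnt π c + (b - cnt π c) = b
    omega
  have hXel : ∀ x ∈ X, c ≤ x := by
    intro x hx
    rw [hXeq, Multiset.mem_add] at hx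
    rcases hx with hx | hx
    · have := (Multiset.mem_filter.mp hx).2; omega
    · rw [Multiset.eq_of_mem_replicate hx]
  have hcount : ∀ v, X.count v = (if c < v then π.count v else 0)
      + (if v = c then b - cnt π c else 0) := by
    intro v
    rw [hXeq, Multiset.count_add, Multiset.count_filter, Multiset.count_replicate]
    by_cases h1 : c < v <;> by_cases h2 : v = c <;> simp [h1, h2] <;> omega
  have hXle : X ≤ π := by
    rw [Multiset.le_iff_count]
    intro v
    rw [hcount v]
    by_cases h1 : c < v
    · simp [h1]; omega
    · by_cases h2 : v = c
      · rw [h2]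
        have hsplit := gce_split π c
        simp [h1, h2]
        omega
      · simp [h1, h2]
  set Y := π - X with hY
  have hXY : X + Y = π := add_tsub_cancel_of_le hXle
  have hYel : ∀ y ∈ Y, y ≤ c := by
    intro y hy
    by_contra hcon
    push_neg at hcon
    have h1 : X.count y = π.count y := by
      rw [hcount y]
      simp [hcon]
      omega
    have h2 : Y.count y = 0 := by
      rw [hY, Multiset.count_sub, h1]
      omega
    have := Multiset.count_pos.mpr hy
    omega
  have hYpos : ∀ y ∈ Y, 0 < y := by
    intro y hy
    exact hπ y (Multiset.mem_of_le tsub_le_self hy)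
  have hconjYcard : (conj Y).card ≤ c := by
    rw [card_conj]
    exact Multiset.sup_le.mpr (fun y hy => hYel y hy)
  constructor
  · show ((conj Y) + Multiset.replicate (c - (conj Y).card) 0).card = b + m
    rw [Multiset.card_add, Multiset.card_replicate]
    omega
  constructor
  · show (X.map (· - c)).card = b
    rw [Multiset.card_map, hXcard]
  · show durf m b ((conj Y) + Multiset.replicate (c - (conj Y).card) 0) (X.map (· - c)) = π
    rw [durf, conj_add_replicate_zero, conj_conj]
    have h1 : Y.filter (fun x => 0 < x) = Y := Multiset.filter_eq_self.mpr hYpos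
    have h2 : (X.map (· - c)).map (· + (b + m)) = X := by
      rw [Multiset.map_map]
      have : ∀ x ∈ X, ((· + (b+m)) ∘ (· - c)) x = id x := by
        intro x hx
        have := hXel x hx
        simp
        omega
      rw [Multiset.map_congr rfl this, Multiset.map_id]
    rw [h1, h2, hXY]

def stair (m : ℕ) : Multiset ℕ := (Multiset.range m).map (fun i => 2 * i + 1)

lemma isOddStaircase_stair (m : ℕ) : IsOddStaircase (stair m) := ⟨m, rfl⟩

@[simp] lemma stair_card (m : ℕ) : (stair m).card = m := by simp [stair]

lemma stair_sum (m : ℕ) : (stair m).sum = m * m := by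
  induction m with
  | zero => simp [stair]
  | succ k ih =>
    have : stair (k+1) = (2*k+1) ::ₘ stair k := by
      simp [stair, Multiset.range_succ]
    rw [this, Multiset.sum_cons, ih]
    ring

lemma stair_eq_of_isOddStaircase {s : Multiset ℕ} (h : IsOddStaircase s) : s = stair s.card := by
  obtain ⟨k, rfl⟩ := h
  simp [stair]

lemma stair_ne_zero {m : ℕ} (h : 0 < m) : stair m ≠ 0 := by
  intro hc
  have := congrArg Multiset.card hc
  simp at this
  omega

lemma stair_eq_zero : stair 0 = 0 := rfl

def dbl (z : Multiset ℕ) : Multiset ℕ := z.map (fun i => 2 * i)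
def hlf (y : Multiset ℕ) : Multiset ℕ := y.map (fun i => i / 2)

lemma hlf_dbl (z : Multiset ℕ) : hlf (dbl z) = z := by
  rw [hlf, dbl, Multiset.map_map]
  have : ∀ i ∈ z, ((fun i => i / 2) ∘ (fun i => 2 * i)) i = id i := by intro i _; simp
  rw [Multiset.map_congr rfl this, Multiset.map_id]

lemma dbl_hlf {y : Multiset ℕ} (h : ∀ i ∈ y, Even i) : dbl (hlf y) = y := by
  rw [hlf, dbl, Multiset.map_map]
  have : ∀ i ∈ y, ((fun i => 2 * i) ∘ (fun i => i / 2)) i = id i := by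
    intro i hi
    obtain ⟨p, hp⟩ := h i hi
    simp
    omega
  rw [Multiset.map_congr rfl this, Multiset.map_id]

lemma dbl_sum (z : Multiset ℕ) : (dbl z).sum = 2 * z.sum := by
  induction z using Multiset.induction with
  | empty => simp [dbl]
  | cons a z ih =>
    rw [dbl, Multiset.map_cons, Multiset.sum_cons, Multiset.sum_cons]
    rw [dbl] at ih
    omega

lemma dbl_evenPartition {z : Multiset ℕ} (h : IsPartitionM z) : IsEvenPartition (dbl z) := by
  constructor
  · intro i hi
    obtain ⟨p, hp, rfl⟩ := Multiset.mem_map.mp hi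
    have := h p hp
    omega
  · intro i hi
    obtain ⟨p, hp, rfl⟩ := Multiset.mem_map.mp hi
    exact ⟨p, by ring⟩

lemma hlf_partition {y : Multiset ℕ} (h : IsEvenPartition y) : IsPartitionM (hlf y) := by
  intro i hi
  obtain ⟨p, hp, rfl⟩ := Multiset.mem_map.mp hi
  have h1 := h.1 p hp
  obtain ⟨q, hq⟩ := h.2 p hp
  omega

/-- forward map -/
noncomputable def F (x : Multiset ℕ × Multiset ℕ) : Multiset ℕ × Multiset ℕ × Bool :=
  if x.2.card < x.1.card then
    (dbl (durf (x.1.card - x.2.card) x.2.card (defl x.1) (defl x.2)),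
      stair (x.1.card - x.2.card), true)
  else
    (dbl (durf (x.2.card - x.1.card) x.1.card (defl x.2) (defl x.1)),
      stair (x.2.card - x.1.card), false)

/-- backward map -/
noncomputable def G (y : Multiset ℕ × Multiset ℕ × Bool) : Multiset ℕ × Multiset ℕ :=
  if y.2.2 then
    (infl (undurf y.2.1.card (hlf y.1)).2.1, infl (undurf y.2.1.card (hlf y.1)).2.2)
  else
    (infl (undurf y.2.1.card (hlf y.1)).2.2, infl (undurf y.2.1.card (hlf y.1)).2.1)

lemma F_mem {n : ℕ} {x : Multiset ℕ × Multiset ℕ}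
    (h : IsDistinctOdd x.1 ∧ IsDistinctOdd x.2 ∧ x.1.sum + x.2.sum = n) :
    IsEvenPartition (F x).1 ∧ IsOddStaircase (F x).2.1 ∧
      ((F x).2.2 = true → (F x).2.1 ≠ 0) ∧ (F x).1.sum + (F x).2.1.sum = n := by
  obtain ⟨h1, h2, h3⟩ := h
  have e1 := defl_sum h1
  have e2 := defl_sum h2
  by_cases hab : x.2.card < x.1.card
  · simp only [F, if_pos hab]
    set b := x.2.card with hbd
    set m := x.1.card - b with hm
    have ha : x.1.card = b + m := by omega
    have hcards : (defl x.2).card = b := card_defl _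
    have hsum := durf_sum m b (defl x.1) (defl x.2) hcards
    refine ⟨dbl_evenPartition (durf_partition m b _ _ hcards), isOddStaircase_stair m, fun _ => stair_ne_zero (by omega), ?_⟩
    rw [dbl_sum, hsum, stair_sum]
    have hr : (b+m)*(b+m) + b*b = 2*(b*(b+m)) + m*m := by ring
    rw [ha] at e1
    omega
  · simp only [F, if_neg hab]
    set a := x.1.card with had
    set m := x.2.card - a with hm
    have hb : x.2.card = a + m := by omega
    have hcards : (defl x.1).card = a := card_defl _
    have hsum := durf_sum m a (defl x.2) (defl x.1) hcards
    refine ⟨dbl_evenPartition (durf_partition m a _ _ hcards), isOddStaircase_stair m, by simp, ?_⟩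
    rw [dbl_sum, hsum, stair_sum]
    have hr : (a+m)*(a+m) + a*a = 2*(a*(a+m)) + m*m := by ring
    rw [hb] at e2
    omega

lemma G_mem {n : ℕ} {y : Multiset ℕ × Multiset ℕ × Bool}
    (h : IsEvenPartition y.1 ∧ IsOddStaircase y.2.1 ∧
      (y.2.2 = true → y.2.1 ≠ 0) ∧ y.1.sum + y.2.1.sum = n) :
    IsDistinctOdd (G y).1 ∧ IsDistinctOdd (G y).2 ∧ (G y).1.sum + (G y).2.sum = n := by
  obtain ⟨h1, h2, h3, h4⟩ := h
  set m := y.2.1.card with hmdef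
  have hρ : IsPartitionM (hlf y.1) := hlf_partition h1
  obtain ⟨hc1, hc2, hd⟩ := undurf_spec m (hlf y.1) hρ
  set u := undurf m (hlf y.1)
  have hss : y.2.1.sum = m * m := by
    conv_lhs => rw [stair_eq_of_isOddStaircase h2]
    rw [stair_sum, ← hmdef]
  have hy1 : y.1.sum = 2 * (hlf y.1).sum := by
    conv_lhs => rw [← dbl_hlf h1.2]
    rw [dbl_sum]
  have hρs : (hlf y.1).sum = u.1 * (u.1 + m) + u.2.1.sum + u.2.2.sum := by
    conv_lhs => rw [← hd]
    rw [durf_sum m u.1 u.2.1 u.2.2 hc2]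
  have hsm : (infl u.2.1).sum + (infl u.2.2).sum = n := by
    rw [infl_sum, infl_sum, hc1, hc2]
    have hr : (u.1+m)*(u.1+m) + u.1*u.1 = 2*(u.1*(u.1+m)) + m*m := by ring
    omega
  by_cases hf : y.2.2
  · have hG : G y = (infl u.2.1, infl u.2.2) := by
      rw [G, if_pos hf]
    rw [hG]
    exact ⟨infl_isDistinctOdd _, infl_isDistinctOdd _, hsm⟩
  · have hG : G y = (infl u.2.2, infl u.2.1) := by
      rw [G, if_neg hf]
    rw [hG]
    refine ⟨infl_isDistinctOdd _, infl_isDistinctOdd _, ?_⟩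
    show (infl u.2.2).sum + (infl u.2.1).sum = n
    omega

lemma GF {x : Multiset ℕ × Multiset ℕ}
    (h1 : IsDistinctOdd x.1) (h2 : IsDistinctOdd x.2) : G (F x) = x := by
  by_cases hab : x.2.card < x.1.card
  · set b := x.2.card
    set m := x.1.card - b with hm
    have hP : (defl x.1).card = b + m := by rw [card_defl]; omega
    have hQ : (defl x.2).card = b := card_defl _
    simp only [F, if_pos (show x.2.card < x.1.card from hab)]
    rw [G]
    simp only [stair_card, hlf_dbl]
    rw [undurf_durf m b _ _ hP hQ]
    simp only [if_pos]
    rw [infl_defl h1, infl_defl h2]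
  · set a := x.1.card
    set m := x.2.card - a with hm
    have hP : (defl x.2).card = a + m := by rw [card_defl]; omega
    have hQ : (defl x.1).card = a := card_defl _
    simp only [F, if_neg (show ¬ x.2.card < x.1.card from hab)]
    rw [G]
    simp only [stair_card, hlf_dbl]
    rw [undurf_durf m a _ _ hP hQ]
    simp only [Bool.false_eq_true, ite_false]
    rw [infl_defl h1, infl_defl h2]

lemma FG {y : Multiset ℕ × Multiset ℕ × Bool}
    (h1 : IsEvenPartition y.1) (h2 : IsOddStaircase y.2.1)
    (h3 : y.2.2 = true → y.2.1 ≠ 0) : F (G y) = y := by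
  set m := y.2.1.card with hmdef
  have hρ : IsPartitionM (hlf y.1) := hlf_partition h1
  obtain ⟨hc1, hc2, hd⟩ := undurf_spec m (hlf y.1) hρ
  set u := undurf m (hlf y.1)
  have hstair : stair m = y.2.1 := (stair_eq_of_isOddStaircase h2).symm
  have hdbl : dbl (durf m u.1 u.2.1 u.2.2) = y.1 := by rw [hd]; exact dbl_hlf h1.2
  by_cases hf : y.2.2
  · have hm0 : 0 < m := by
      rcases Nat.eq_zero_or_pos m with h | h
      · exfalso
        apply h3 hf
        rw [stair_eq_of_isOddStaircase h2, ← hmdef, h]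
        rfl
      · exact h
    have hG : G y = (infl u.2.1, infl u.2.2) := by
      rw [G, if_pos hf]
    rw [hG]
    have hcc1 : (infl u.2.1).card = u.1 + m := by rw [card_infl, hc1]
    have hcc2 : (infl u.2.2).card = u.1 := by rw [card_infl, hc2]
    rw [F]
    simp only [hcc1, hcc2]
    have hlt : u.1 < u.1 + m := by omega
    rw [if_pos hlt]
    have hmm : u.1 + m - u.1 = m := by omega
    rw [hmm, defl_infl, defl_infl, hdbl, hstair]
    have : y = (y.1, y.2.1, y.2.2) := rfl
    rw [this, hf]
  · have hG : G y = (infl u.2.2, infl u.2.1) := by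
      rw [G, if_neg hf]
    rw [hG]
    have hcc1 : (infl u.2.1).card = u.1 + m := by rw [card_infl, hc1]
    have hcc2 : (infl u.2.2).card = u.1 := by rw [card_infl, hc2]
    rw [F]
    simp only [hcc1, hcc2]
    have hnlt : ¬ (u.1 + m < u.1) := by omega
    rw [if_neg hnlt]
    have hmm : u.1 + m - u.1 = m := by omega
    rw [hmm, defl_infl, defl_infl, hdbl, hstair]
    have : y = (y.1, y.2.1, y.2.2) := rfl
    rw [this]
    have : y.2.2 = false := by simpa using hf
    rw [this]

end MW

theorem modified_wright_count (n : ℕ) :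
    Nat.card {x : Multiset ℕ × Multiset ℕ //
        IsDistinctOdd x.1 ∧ IsDistinctOdd x.2 ∧ x.1.sum + x.2.sum = n} =
    Nat.card {y : Multiset ℕ × (Multiset ℕ × Bool) //
        IsEvenPartition y.1 ∧ IsOddStaircase y.2.1 ∧
        (y.2.2 = true → y.2.1 ≠ 0) ∧ y.1.sum + y.2.1.sum = n} := by
  apply Nat.card_congr
  exact {
    toFun := fun x => ⟨MW.F x.1, MW.F_mem x.2⟩
    invFun := fun y => ⟨MW.G y.1, MW.G_mem y.2⟩
    left_inv := fun x => Subtype.ext (MW.GF x.2.1 x.2.2.1)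
    right_inv := fun y => Subtype.ext (MW.FG y.2.1 y.2.2.1 y.2.2.2.1) }
end

section
/- The generating function identity: the number of pairs of partitions into distinct odd parts of total size n, summed with weight q^n, equals (1/∏_{k≥1}(1−q^{2k})) · Σ_{m∈ℤ} q^{m²}. Equivalently, Σ_n pod_distinct-odd-pairs(n) q^n = (Σ_{m=−∞}^{∞} q^{m²}) / (q²; q²)_∞. -/
open Multiset

/-! ### Counting profiles of multisets -/

/-- `cnt s t` is the number of elements of `s` that are `≥ t`. -/
def cnt (s : Multiset ℕ) (t : ℕ) : ℕ := Multiset.countP (fun x => t ≤ x) s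

lemma cnt_zero_eq_card (s : Multiset ℕ) : cnt s 0 = Multiset.card s := by
  rw [cnt, Multiset.countP_eq_card.2]; intro a _; exact Nat.zero_le _

lemma cnt_le_card (s : Multiset ℕ) (t : ℕ) : cnt s t ≤ Multiset.card s :=
  Multiset.countP_le_card _ _

lemma cnt_anti (s : Multiset ℕ) {t t' : ℕ} (h : t ≤ t') : cnt s t' ≤ cnt s t := by
  unfold cnt
  induction s using Multiset.induction with
  | empty => simp
  | cons a s ih =>
    rw [Multiset.countP_cons, Multiset.countP_cons]
    gcongr
    split <;> split <;> omega

lemma cnt_pos_iff (s : Multiset ℕ) (t : ℕ) : 0 < cnt s t ↔ ∃ x ∈ s, t ≤ x :=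
  Multiset.countP_pos

lemma cnt_eq_card_filter (s : Multiset ℕ) (t : ℕ) :
    cnt s t = Multiset.card (s.filter (fun x => t ≤ x)) :=
  Multiset.countP_eq_card_filter _ _

lemma cnt_succ (s : Multiset ℕ) (a : ℕ) : cnt s a = s.count a + cnt s (a + 1) := by
  unfold cnt
  induction s using Multiset.induction with
  | empty => simp
  | cons b s ih =>
    rw [Multiset.countP_cons, Multiset.countP_cons, Multiset.count_cons]
    split_ifs <;> omega

lemma cnt_eq_zero_of_le {s : Multiset ℕ} {t : ℕ} (h : ∀ x ∈ s, x < t) : cnt s t = 0 := by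
  rw [cnt, Multiset.countP_eq_zero]
  intro a ha
  exact Nat.not_le.2 (h a ha)

/-- A multiset of naturals is determined by its cardinality and its counting profile. -/
lemma eq_of_cnt_eq {s s' : Multiset ℕ} (hc : Multiset.card s = Multiset.card s')
    (h : ∀ t, 1 ≤ t → cnt s t = cnt s' t) : s = s' := by
  have hcnt : ∀ t, cnt s t = cnt s' t := by
    intro t
    rcases Nat.eq_zero_or_pos t with rfl | ht
    · rw [cnt_zero_eq_card, cnt_zero_eq_card, hc]
    · exact h t ht
  ext a
  have h1 := cnt_succ s a
  have h2 := cnt_succ s' a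
  have := hcnt a
  have := hcnt (a + 1)
  omega

lemma sup_mem_of_ne_zero {s : Multiset ℕ} (h : s.sup ≠ 0) : s.sup ∈ s := by
  induction s using Multiset.induction with
  | empty => simp at h
  | cons a s ih =>
    rw [Multiset.sup_cons] at *
    rcases le_total a s.sup with hle | hle
    · rw [sup_eq_right.2 hle] at h ⊢
      exact Multiset.mem_cons_of_mem (ih h)
    · rw [sup_eq_left.2 hle]
      exact Multiset.mem_cons_self _ _

/-- Padded conjugate: the multiset of column sizes of `s`, for columns `1, ..., l`. -/
def pconj (l : ℕ) (s : Multiset ℕ) : Multiset ℕ :=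
  (Multiset.range l).map (fun j => cnt s (j + 1))

/-- The conjugate partition of a multiset of naturals. -/
def mconj (s : Multiset ℕ) : Multiset ℕ := pconj s.sup s

lemma card_pconj (l : ℕ) (s : Multiset ℕ) : Multiset.card (pconj l s) = l := by
  simp [pconj]

lemma mem_pconj {l : ℕ} {s : Multiset ℕ} {x : ℕ} :
    x ∈ pconj l s ↔ ∃ j < l, cnt s (j + 1) = x := by
  simp [pconj, eq_comm]

lemma cnt_pconj (l : ℕ) (s : Multiset ℕ) (t : ℕ) :
    cnt (pconj l s) t = ((Finset.range l).filter (fun j => t ≤ cnt s (j + 1))).card := by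
  rw [cnt, pconj, Multiset.countP_map]
  rfl

/-- `F s t` : the number of columns of `s` of size at least `t`;
this is the counting profile of the conjugate. -/
def Fc (s : Multiset ℕ) (t : ℕ) : ℕ :=
  ((Finset.range s.sup).filter (fun j => t ≤ cnt s (j + 1))).card

lemma cnt_mconj (s : Multiset ℕ) (t : ℕ) : cnt (mconj s) t = Fc s t :=
  cnt_pconj _ _ _

lemma Fc_eq_of_le {s : Multiset ℕ} {b t : ℕ} (hb : s.sup ≤ b) (ht : 1 ≤ t) :
    ((Finset.range b).filter (fun j => t ≤ cnt s (j + 1))).card = Fc s t := by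
  unfold Fc
  congr 1
  ext j
  simp only [Finset.mem_filter, Finset.mem_range]
  constructor
  · rintro ⟨hj, hcnt⟩
    refine ⟨?_, hcnt⟩
    obtain ⟨x, hx, hjx⟩ := (cnt_pos_iff _ _).1 (lt_of_lt_of_le ht hcnt)
    exact lt_of_lt_of_le hjx (Multiset.le_sup hx)
  · rintro ⟨hj, hcnt⟩
    exact ⟨lt_of_lt_of_le hj hb, hcnt⟩

/-- The Galois-type correspondence for conjugation. -/
lemma le_Fc_iff {s : Multiset ℕ} {t c : ℕ} (ht : 1 ≤ t) (hc : 1 ≤ c) :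
    t ≤ Fc s c ↔ c ≤ cnt s t := by
  constructor
  · intro h
    have : ∃ j ∈ (Finset.range s.sup).filter (fun j => c ≤ cnt s (j + 1)), t - 1 ≤ j := by
      by_contra hcon
      push_neg at hcon
      have hsub : (Finset.range s.sup).filter (fun j => c ≤ cnt s (j + 1)) ⊆
          Finset.range (t - 1) := by
        intro j hj
        exact Finset.mem_range.2 (by have := hcon j hj; omega)
      have := Finset.card_le_card hsub
      rw [Finset.card_range] at this
      unfold Fc at h
      omega
    obtain ⟨j, hj, hjt⟩ := this
    have hcnt : c ≤ cnt s (j + 1) := (Finset.mem_filter.1 hj).2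
    exact le_trans hcnt (cnt_anti s (by omega))
  · intro h
    have hsub : Finset.range t ⊆ (Finset.range s.sup).filter (fun j => c ≤ cnt s (j + 1)) := by
      intro i hi
      rw [Finset.mem_range] at hi
      refine Finset.mem_filter.2 ⟨Finset.mem_range.2 ?_, le_trans h (cnt_anti s (by omega))⟩
      -- i < s.sup
      obtain ⟨x, hx, htx⟩ := (cnt_pos_iff s t).1 (lt_of_lt_of_le hc h)
      exact lt_of_lt_of_le hi (le_trans htx (Multiset.le_sup hx))
    have := Finset.card_le_card hsub
    rwa [Finset.card_range] at this
  
lemma filter_range_lt (l c : ℕ) :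
    (Finset.range l).filter (fun j => j < c) = Finset.range (min c l) := by
  ext j
  simp only [Finset.mem_filter, Finset.mem_range, lt_min_iff]
  tauto

/-- Double conjugation, padded version. -/
lemma pconj_mconj (s : Multiset ℕ) : pconj (Multiset.card s) (mconj s) = s := by
  apply eq_of_cnt_eq
  · rw [card_pconj]
  · intro t ht
    rw [cnt_pconj]
    have : ∀ j : ℕ, (t ≤ cnt (mconj s) (j + 1)) ↔ j < cnt s t := by
      intro j
      rw [cnt_mconj, le_Fc_iff ht (by omega)]
      omega
    rw [Finset.filter_congr (fun j _ => by rw [this j]), filter_range_lt]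
    rw [Finset.card_range]
    exact min_eq_left (cnt_le_card s t)

/-- Double conjugation, other direction. -/
lemma mconj_pconj {l : ℕ} {s : Multiset ℕ} (hs : ∀ x ∈ s, 0 < x ∧ x ≤ l) :
    mconj (pconj l s) = s := by
  have hsup : s.sup ≤ l := by
    rcases Nat.eq_zero_or_pos s.sup with h0 | hpos
    · omega
    · exact (hs _ (sup_mem_of_ne_zero (by omega))).2
  have hcard : cnt s 1 = Multiset.card s := by
    rw [cnt, Multiset.countP_eq_card.2]
    intro a ha; exact (hs a ha).1
  have hcntX : ∀ i : ℕ, cnt (pconj l s) (i + 1) = Fc s (i + 1) := by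
    intro i
    rw [cnt_pconj, Fc_eq_of_le hsup (by omega)]
  have hsupX : (pconj l s).sup = Multiset.card s := by
    rcases Nat.eq_zero_or_pos l with rfl | hl
    · have : s = 0 := by
        rcases Multiset.empty_or_exists_mem s with h | ⟨a, ha⟩
        · exact h
        · have := hs a ha; omega
      subst this; simp [pconj]
    · apply le_antisymm
      · apply Multiset.sup_le.2
        intro x hx
        obtain ⟨j, _, rfl⟩ := mem_pconj.1 hx
        exact cnt_le_card s _
      · rw [← hcard]
        apply Multiset.le_sup
        rw [mem_pconj]
        exact ⟨0, hl, rfl⟩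
  apply eq_of_cnt_eq
  · rw [mconj, card_pconj, hsupX]
  · intro t ht
    rw [mconj, cnt_pconj]
    have : ∀ j : ℕ, (t ≤ cnt (pconj l s) (j + 1)) ↔ j < cnt s t := by
      intro j
      rw [hcntX j, le_Fc_iff ht (by omega)]
      omega
    rw [Finset.filter_congr (fun j _ => by rw [this j]), filter_range_lt, Finset.card_range,
      hsupX]
    exact min_eq_left (cnt_le_card s t)

/-- Conjugation preserves the sum (padded version). -/
lemma sum_pconj {l : ℕ} {s : Multiset ℕ} (h : s.sup ≤ l) : (pconj l s).sum = s.sum := by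
  have key : ∀ s : Multiset ℕ, s.sup ≤ l → ∑ j ∈ Finset.range l, cnt s (j + 1) = s.sum := by
    intro s
    induction s using Multiset.induction with
    | empty => intro _; simp [cnt]
    | cons a s ih =>
      intro hsup
      rw [Multiset.sup_cons, sup_le_iff] at hsup
      have hcnt : ∀ j, cnt (a ::ₘ s) (j + 1) = cnt s (j + 1) + (if j + 1 ≤ a then 1 else 0) := by
        intro j
        rw [cnt, Multiset.countP_cons, cnt]
      rw [Finset.sum_congr rfl (fun j _ => hcnt j), Finset.sum_add_distrib, ih hsup.2,
        Multiset.sum_cons]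
      have : ∑ j ∈ Finset.range l, (if j + 1 ≤ a then 1 else 0) = a := by
        rw [Finset.sum_ite, Finset.sum_const_zero, add_zero, Finset.sum_const, smul_eq_mul,
          mul_one]
        rw [Finset.filter_congr (fun j _ => by constructor <;> intro <;> omega : ∀ j ∈ Finset.range l, (j+1 ≤ a) ↔ (j < a)), filter_range_lt, Finset.card_range]
        exact min_eq_left hsup.1
      omega
  have : (pconj l s).sum = ∑ j ∈ Finset.range l, cnt s (j + 1) := by
    rw [pconj, ← Finset.range_val]
    rfl
  rw [this, key s h]

lemma sum_mconj (s : Multiset ℕ) : (mconj s).sum = s.sum := sum_pconj le_rfl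

lemma mem_mconj_pos {s : Multiset ℕ} {x : ℕ} (hx : x ∈ mconj s) : 0 < x := by
  obtain ⟨j, hj, rfl⟩ := mem_pconj.1 hx
  rw [cnt_pos_iff]
  exact ⟨s.sup, sup_mem_of_ne_zero (by omega), by omega⟩

lemma mem_mconj_le_card {s : Multiset ℕ} {x : ℕ} (hx : x ∈ mconj s) : x ≤ Multiset.card s := by
  obtain ⟨j, hj, rfl⟩ := mem_pconj.1 hx
  exact cnt_le_card s _

/-! ### Staircase bijection: distinct odd partitions vs arbitrary multisets -/

def stairF : ℕ → List ℕ → List ℕ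
  | _, [] => []
  | c, a :: l => (2 * a + c) :: stairF (c + 2) l

def unstairF : ℕ → List ℕ → List ℕ
  | _, [] => []
  | c, o :: l => (o - c) / 2 :: unstairF (c + 2) l

lemma stairF_length (c : ℕ) (l : List ℕ) : (stairF c l).length = l.length := by
  induction l generalizing c with
  | nil => rfl
  | cons a l ih => simp [stairF, ih]

lemma unstairF_length (c : ℕ) (l : List ℕ) : (unstairF c l).length = l.length := by
  induction l generalizing c with
  | nil => rfl
  | cons a l ih => simp [unstairF, ih]

lemma stairF_sum (c : ℕ) (hc : 1 ≤ c) (l : List ℕ) :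
    (stairF c l).sum = 2 * l.sum + (c - 1) * l.length + l.length ^ 2 := by
  induction l generalizing c with
  | nil => simp [stairF]
  | cons a l ih =>
    obtain ⟨d, rfl⟩ : ∃ d, c = d + 1 := ⟨c - 1, by omega⟩
    rw [stairF, List.sum_cons, ih (d + 1 + 2) (by omega), List.sum_cons, List.length_cons]
    have h3 : d + 1 + 2 - 1 = d + 2 := by omega
    have h4 : d + 1 - 1 = d := by omega
    rw [h3, h4]
    ring

lemma stairF_mem {c : ℕ} {l : List ℕ} {x : ℕ} (hx : x ∈ stairF c l) :
    (Odd c → Odd x) ∧ ∃ b ∈ l, 2 * b + c ≤ x := by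
  induction l generalizing c with
  | nil => simp [stairF] at hx
  | cons a l ih =>
    rw [stairF, List.mem_cons] at hx
    rcases hx with rfl | hx
    · refine ⟨fun hc => by rcases hc with ⟨t, ht⟩; exact ⟨a + t, by omega⟩, a, by simp, le_rfl⟩
    · obtain ⟨ho, b, hb, hbx⟩ := ih hx
      exact ⟨fun hc => ho (by rcases hc with ⟨t, ht⟩; exact ⟨t + 1, by omega⟩),
        b, List.mem_cons_of_mem _ hb, by omega⟩

lemma stairF_sorted {c : ℕ} {l : List ℕ} (hl : l.Pairwise (· ≤ ·)) :
    (stairF c l).Pairwise (· < ·) := by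
  induction l generalizing c with
  | nil => exact List.Pairwise.nil
  | cons a l ih =>
    rw [List.pairwise_cons] at hl
    rw [stairF, List.pairwise_cons]
    refine ⟨?_, ih hl.2⟩
    intro y hy
    obtain ⟨-, b, hb, hby⟩ := stairF_mem hy
    have := hl.1 b hb
    omega

lemma unstairF_stairF (c : ℕ) (l : List ℕ) : unstairF c (stairF c l) = l := by
  induction l generalizing c with
  | nil => rfl
  | cons a l ih =>
    rw [stairF, unstairF, ih (c + 2)]
    congr 1
    omega

lemma stairF_unstairF {c : ℕ} {l : List ℕ} (hc : Odd c)
    (hl : ∀ x ∈ l, Odd x ∧ c ≤ x) (hs : l.Pairwise (· < ·)) :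
    stairF c (unstairF c l) = l := by
  induction l generalizing c with
  | nil => rfl
  | cons o t ih =>
    rw [List.pairwise_cons] at hs
    have ho := hl o (by simp)
    rw [unstairF, stairF, ih (by rcases hc with ⟨u, hu⟩; exact ⟨u + 1, by omega⟩)
      (fun x hx => ⟨(hl x (List.mem_cons_of_mem _ hx)).1, ?_⟩) hs.2]
    · congr 1
      rcases ho.1 with ⟨u, hu⟩
      rcases hc with ⟨v, hv⟩
      omega
    · -- c + 2 ≤ x for x in tail
      have hox := hs.1 x hx
      have hxodd := (hl x (List.mem_cons_of_mem _ hx)).1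
      rcases ho.1 with ⟨u, hu⟩
      rcases hxodd with ⟨w, hw⟩
      omega

lemma unstairF_ge {c b : ℕ} {l : List ℕ} (hc : Odd c)
    (hl : ∀ x ∈ l, Odd x ∧ 2 * b + c ≤ x) (hs : l.Pairwise (· < ·)) :
    ∀ y ∈ unstairF c l, b ≤ y := by
  induction l generalizing c with
  | nil => simp [unstairF]
  | cons o t ih =>
    rw [List.pairwise_cons] at hs
    have ho := hl o (by simp)
    intro y hy
    rw [unstairF, List.mem_cons] at hy
    rcases hy with rfl | hy
    · have := ho.2
      omega
    · refine ih (by rcases hc with ⟨u, hu⟩; exact ⟨u + 1, by omega⟩) ?_ hs.2 y hy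
      intro x hx
      have hox := hs.1 x hx
      have := hl x (List.mem_cons_of_mem _ hx)
      rcases ho.1 with ⟨u, hu⟩
      rcases this.1 with ⟨w, hw⟩
      exact ⟨this.1, by omega⟩

lemma unstairF_sorted {c : ℕ} {l : List ℕ} (hc : Odd c)
    (hl : ∀ x ∈ l, Odd x ∧ c ≤ x) (hs : l.Pairwise (· < ·)) :
    (unstairF c l).Pairwise (· ≤ ·) := by
  induction l generalizing c with
  | nil => exact List.Pairwise.nil
  | cons o t ih =>
    rw [List.pairwise_cons] at hs
    have ho := hl o (by simp)
    rw [unstairF, List.pairwise_cons]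
    constructor
    · -- every y in unstairF (c+2) t is ≥ (o - c)/2
      apply unstairF_ge (b := (o - c) / 2) (by rcases hc with ⟨u, hu⟩; exact ⟨u + 1, by omega⟩)
        ?_ hs.2
      intro x hx
      have hox := hs.1 x hx
      have hxx := hl x (List.mem_cons_of_mem _ hx)
      rcases ho.1 with ⟨u, hu⟩
      rcases hxx.1 with ⟨w, hw⟩
      rcases hc with ⟨v, hv⟩
      exact ⟨hxx.1, by omega⟩
    · refine ih (by rcases hc with ⟨u, hu⟩; exact ⟨u + 1, by omega⟩) ?_ hs.2
      intro x hx
      have hox := hs.1 x hx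
      have hxx := hl x (List.mem_cons_of_mem _ hx)
      rcases ho.1 with ⟨u, hu⟩
      rcases hxx.1 with ⟨w, hw⟩
      exact ⟨hxx.1, by omega⟩


lemma sort_coe_of_sorted {l : List ℕ} (h : l.Pairwise (· ≤ ·)) :
    Multiset.sort (↑l : Multiset ℕ) (· ≤ ·) = l := by
  apply List.Perm.eq_of_pairwise' (Multiset.pairwise_sort _ _) h
  rw [← Multiset.coe_eq_coe, Multiset.sort_eq]

lemma sort_sorted_lt_of_nodup {m : Multiset ℕ} (h : m.Nodup) :
    (Multiset.sort m (· ≤ ·)).Pairwise (· < ·) := by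
  refine ((Multiset.pairwise_sort _ _).and (?_ : (Multiset.sort m (· ≤ ·)).Nodup)).imp fun h => lt_of_le_of_ne h.1 h.2
  rw [← Multiset.coe_nodup, Multiset.sort_eq]
  exact h

noncomputable def eA : { m : Multiset ℕ // IsDistinctOdd m } ≃ Multiset ℕ where
  toFun lam := ↑(unstairF 1 (Multiset.sort lam.val (· ≤ ·)))
  invFun a := ⟨↑(stairF 1 (Multiset.sort a (· ≤ ·))), by
    constructor
    · rw [Multiset.coe_nodup]
      exact (stairF_sorted (Multiset.pairwise_sort _ _)).imp ne_of_lt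
    · intro i hi
      rw [Multiset.mem_coe] at hi
      exact (stairF_mem hi).1 (by decide)⟩
  left_inv := by
    rintro ⟨m, hnd, hodd⟩
    apply Subtype.ext
    simp only
    have hs : (Multiset.sort m (· ≤ ·)).Pairwise (· < ·) := sort_sorted_lt_of_nodup hnd
    have hl : ∀ x ∈ Multiset.sort m (· ≤ ·), Odd x ∧ 1 ≤ x := by
      intro x hx
      rw [Multiset.mem_sort] at hx
      have := hodd x hx
      exact ⟨this, this.pos⟩
    rw [sort_coe_of_sorted (unstairF_sorted (by decide) hl hs),
      stairF_unstairF (by decide) hl hs, Multiset.sort_eq]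
  right_inv := by
    intro a
    simp only
    rw [sort_coe_of_sorted ((stairF_sorted (Multiset.pairwise_sort _ _)).imp le_of_lt),
      unstairF_stairF, Multiset.sort_eq]

lemma eA_symm_sum (a : Multiset ℕ) :
    (eA.symm a).val.sum = 2 * a.sum + (Multiset.card a) ^ 2 := by
  show (↑(stairF 1 (Multiset.sort a (· ≤ ·))) : Multiset ℕ).sum = _
  rw [Multiset.sum_coe, stairF_sum 1 le_rfl]
  have h1 : (Multiset.sort a (· ≤ ·)).sum = a.sum := by
    rw [← Multiset.sum_coe, Multiset.sort_eq]
  have h2 : (Multiset.sort a (· ≤ ·)).length = Multiset.card a := Multiset.length_sort _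
  rw [h1, h2]
  omega

lemma eA_symm_card (a : Multiset ℕ) :
    Multiset.card (eA.symm a).val = Multiset.card a := by
  show Multiset.card (↑(stairF 1 (Multiset.sort a (· ≤ ·))) : Multiset ℕ) = _
  rw [Multiset.coe_card, stairF_length, Multiset.length_sort]

/-! ### The Durfee rectangle bijection -/

def Cpred (m : ℤ) (g : Multiset ℕ) (j : ℕ) : Prop :=
  j ≤ m.toNat ∨ j ≤ cnt g ((j : ℤ) - m).toNat

instance (m : ℤ) (g : Multiset ℕ) : DecidablePred (Cpred m g) := fun j => by
  unfold Cpred; infer_instance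

def kOf (m : ℤ) (g : Multiset ℕ) : ℕ :=
  Nat.findGreatest (Cpred m g) (Multiset.card g + m.toNat)

noncomputable def durfee (x : Multiset ℕ × Multiset ℕ) : ℤ × Multiset ℕ :=
  ((Multiset.card x.1 : ℤ) - Multiset.card x.2,
    ((x.1.map (· + Multiset.card x.2)) + mconj x.2).filter (0 < ·))

noncomputable def undurfee (y : ℤ × Multiset ℕ) : Multiset ℕ × Multiset ℕ :=
  let k := kOf y.1 y.2
  let l := ((k : ℤ) - y.1).toNat
  let z := k - cnt y.2 (l + 1)
  ((y.2.filter (fun x => l < x)).map (· - l) + Multiset.replicate z 0,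
   pconj l (y.2.filter (fun x => x ≤ l) - Multiset.replicate z l))

lemma cnt_add (s t : Multiset ℕ) (u : ℕ) : cnt (s + t) u = cnt s u + cnt t u :=
  Multiset.countP_add _ _ _

lemma cnt_filter_pos (s : Multiset ℕ) {t : ℕ} (ht : 1 ≤ t) :
    cnt (s.filter (fun x => 0 < x)) t = cnt s t := by
  rw [cnt, Multiset.countP_filter]
  apply Multiset.countP_congr rfl
  intro x _
  simp only [eq_iff_iff]
  omega

lemma cnt_map_add_const (a : Multiset ℕ) (l t : ℕ) :
    cnt (a.map (· + l)) t = if t ≤ l then Multiset.card a else cnt a (t - l) := by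
  rw [cnt, Multiset.countP_map]
  split_ifs with h
  · rw [← Multiset.countP_eq_card_filter]
    rw [Multiset.countP_eq_card.2]
    intro x _; omega
  · rw [← Multiset.countP_eq_card_filter, cnt]
    apply Multiset.countP_congr rfl
    intro x _
    simp only [eq_iff_iff]
    omega

lemma cnt_mconj_eq_zero {b : Multiset ℕ} {t : ℕ} (ht : Multiset.card b < t) :
    cnt (mconj b) t = 0 := by
  apply cnt_eq_zero_of_le
  intro x hx
  exact lt_of_le_of_lt (mem_mconj_le_card hx) ht

lemma sum_filter_pos (s : Multiset ℕ) : (s.filter (fun x => 0 < x)).sum = s.sum := by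
  conv_rhs => rw [← Multiset.filter_add_not (fun x => 0 < x) s]
  rw [Multiset.sum_add]
  have : (s.filter (fun a => ¬0 < a)).sum = 0 := by
    rw [Multiset.sum_eq_zero]
    intro x hx
    have := Multiset.of_mem_filter hx
    omega
  omega

lemma sum_map_add_const (a : Multiset ℕ) (l : ℕ) :
    (a.map (· + l)).sum = a.sum + Multiset.card a * l := by
  rw [Multiset.sum_map_add]
  simp [Multiset.map_id', mul_comm]

lemma durfee_fst (x : Multiset ℕ × Multiset ℕ) :
    (durfee x).1 = (Multiset.card x.1 : ℤ) - Multiset.card x.2 := rfl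

lemma durfee_pos (x : Multiset ℕ × Multiset ℕ) : ∀ i ∈ (durfee x).2, 0 < i := by
  intro i hi
  exact Multiset.of_mem_filter hi

lemma durfee_sum (x : Multiset ℕ × Multiset ℕ) :
    (durfee x).2.sum = x.1.sum + x.2.sum + Multiset.card x.1 * Multiset.card x.2 := by
  show (Multiset.filter (0 < ·) ((x.1.map (· + Multiset.card x.2)) + mconj x.2)).sum = _
  rw [sum_filter_pos, Multiset.sum_add, sum_map_add_const, sum_mconj]
  ring

section DurfeeLeft

variable (a b : Multiset ℕ)

lemma durfee_left : undurfee (durfee (a, b)) = (a, b) := by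
  set k := Multiset.card a with hk
  set l := Multiset.card b with hl
  set m : ℤ := (k : ℤ) - l with hm
  set g0 : Multiset ℕ := a.map (· + l) + mconj b with hg0
  set g' : Multiset ℕ := g0.filter (0 < ·) with hg'
  have hmtoNat : m.toNat = k - l := by omega
  -- profile of g'
  have hcnt' : ∀ t, 1 ≤ t → cnt g' t = cnt g0 t := fun t ht => cnt_filter_pos g0 ht
  have hcnt0 : ∀ t, 1 ≤ t →
      cnt g' t = (if t ≤ l then k + cnt (mconj b) t else cnt a (t - l)) := by
    intro t ht
    rw [hcnt' t ht, hg0, cnt_add, cnt_map_add_const]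
    split_ifs with h
    · rfl
    · rw [cnt_mconj_eq_zero (by omega)]
      omega
  have hcnthigh : ∀ t, l + 1 ≤ t → cnt g' t = cnt a (t - l) := by
    intro t ht
    rw [hcnt0 t (by omega), if_neg (by omega)]
  have hcard' : Multiset.card g' = cnt g0 1 := by
    rw [hg', Multiset.filter_congr (q := fun x => 1 ≤ x) (fun x _ => by constructor <;> intro <;> omega),
      ← cnt_eq_card_filter]
  -- recover k
  have hkOf : kOf m g' = k := by
    rw [kOf, Nat.findGreatest_eq_iff]
    refine ⟨?_, ?_, ?_⟩
    · -- k ≤ card g' + m.toNat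
      rcases Nat.eq_zero_or_pos l with hl0 | hlpos
      · omega
      · have : cnt g' 1 = k + cnt (mconj b) 1 := by rw [hcnt0 1 le_rfl, if_pos (by omega)]
        have h2 := hcnt' 1 le_rfl
        omega
    · intro hk0
      rcases Nat.eq_zero_or_pos l with hl0 | hlpos
      · left; omega
      · right
        have htn : ((k : ℤ) - m).toNat = l := by omega
        rw [htn]
        have : cnt g' l = k + cnt (mconj b) l := by rw [hcnt0 l hlpos, if_pos le_rfl]
        omega
    · intro j hj _
      rw [Cpred]
      push_neg
      constructor
      · omega
      · have htn : ((j : ℤ) - m).toNat = l + (j - k) := by omega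
        rw [htn]
        have := hcnthigh (l + (j - k)) (by omega)
        have h2 : cnt a (l + (j - k) - l) ≤ k := by rw [hk]; exact cnt_le_card _ _
        omega
  -- the pieces
  have hl' : ((k : ℤ) - m).toNat = l := by omega
  have hcnta1 : cnt g' (l + 1) = cnt a 1 := by
    have := hcnthigh (l + 1) le_rfl
    simpa using this
  have hcnt_a_card : cnt a 0 = k := by rw [cnt_zero_eq_card, hk]
  have hz : k - cnt g' (l + 1) = a.count 0 := by
    have h0 := cnt_succ a 0
    simp only [Nat.zero_add] at h0
    have h1 : cnt a 1 ≤ Multiset.card a := cnt_le_card a 1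
    omega
  -- first component
  have hfilter_lt : g'.filter (fun x => l < x) = (a.filter (fun x => 0 < x)).map (· + l) := by
    rw [hg', Multiset.filter_filter, hg0, Multiset.filter_add]
    have h2 : (mconj b).filter (fun x => l < x ∧ 0 < x) = 0 := by
      rw [Multiset.filter_eq_nil]
      intro x hx
      have := mem_mconj_le_card hx
      omega
    rw [h2, add_zero, Multiset.filter_map]
    congr 1
    apply Multiset.filter_congr
    intro x _
    show (l < x + l ∧ 0 < x + l) ↔ 0 < x
    omega
  have hfirst : (g'.filter (fun x => l < x)).map (· - l) +
      Multiset.replicate (k - cnt g' (l + 1)) 0 = a := by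
    rw [hfilter_lt, Multiset.map_map, hz]
    have : Multiset.map ((· - l) ∘ (· + l)) (a.filter (fun x => 0 < x)) =
        a.filter (fun x => 0 < x) := by
      rw [Multiset.map_congr (g := fun x : ℕ => x) rfl (fun x _ => by simp), Multiset.map_id']
    rw [this]
    have hrep : Multiset.replicate (a.count 0) 0 = a.filter (fun x => ¬ 0 < x) := by
      rw [Multiset.filter_congr (q := fun x => x = 0) (fun x _ => by constructor <;> intro <;> omega)]
      rw [Multiset.filter_eq']
    rw [hrep, Multiset.filter_add_not]
  -- second component
  have hsecond : pconj l (g'.filter (fun x => x ≤ l) -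
      Multiset.replicate (k - cnt g' (l + 1)) l) = b := by
    rcases Nat.eq_zero_or_pos l with hl0 | hlpos
    · have : b = 0 := by rw [← Multiset.card_eq_zero, ← hl, hl0]
      rw [hl0, this]
      rfl
    · have hfle : g'.filter (fun x => x ≤ l) = Multiset.replicate (a.count 0) l + mconj b := by
        rw [hg', Multiset.filter_filter, hg0, Multiset.filter_add]
        have h1 : (a.map (· + l)).filter (fun x => x ≤ l ∧ 0 < x) =
            Multiset.replicate (a.count 0) l := by
          rw [Multiset.filter_map]
          have : a.filter ((fun x => x ≤ l ∧ 0 < x) ∘ (· + l)) = a.filter (fun x => x = 0) := by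
            apply Multiset.filter_congr
            intro x _
            show (x + l ≤ l ∧ 0 < x + l) ↔ x = 0
            omega
          rw [this, Multiset.filter_eq', Multiset.map_replicate, Nat.zero_add]
        have h2 : (mconj b).filter (fun x => x ≤ l ∧ 0 < x) = mconj b := by
          rw [Multiset.filter_eq_self]
          intro x hx
          exact ⟨by rw [hl]; exact mem_mconj_le_card hx, mem_mconj_pos hx⟩
        rw [h1, h2]
      rw [hfle, hz, add_tsub_cancel_left, hl, pconj_mconj]
  show undurfee (m, g') = (a, b)
  rw [undurfee]
  simp only [hkOf, hl']
  rw [Prod.mk.injEq]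
  exact ⟨hfirst, hsecond⟩

end DurfeeLeft

lemma durfee_right (m : ℤ) (g : Multiset ℕ) (hg : ∀ i ∈ g, 0 < i) :
    durfee (undurfee (m, g)) = (m, g) := by
  set B := Multiset.card g + m.toNat with hB
  set k := kOf m g with hk
  have hC0 : Cpred m g 0 := Or.inl (Nat.zero_le _)
  have hCk : Cpred m g k := Nat.findGreatest_spec (Nat.zero_le _) hC0
  have hkB : k ≤ B := Nat.findGreatest_le _
  have hge : m.toNat ≤ k := Nat.le_findGreatest (by omega) (Or.inl le_rfl)
  have hmk : m ≤ (k : ℤ) := le_trans (Int.self_le_toNat m) (by exact_mod_cast hge)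
  set l := ((k : ℤ) - m).toNat with hldef
  have hlZ : (l : ℤ) = (k : ℤ) - m := Int.toNat_of_nonneg (by omega)
  have hnot : ∀ j, k < j → ¬ Cpred m g j := by
    intro j hj
    by_cases hjB : j ≤ B
    · exact Nat.findGreatest_is_greatest hj hjB
    · intro hCj
      rcases hCj with h | h
      · omega
      · have := cnt_le_card g (((j : ℤ) - m).toNat)
        omega
  have hzk : cnt g (l + 1) ≤ k := by
    have hn := hnot (k + 1) (Nat.lt_succ_self _)
    rw [Cpred] at hn
    push_neg at hn
    have htn : (((k + 1 : ℕ) : ℤ) - m).toNat = l + 1 := by omega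
    rw [htn] at hn
    omega
  set z := k - cnt g (l + 1) with hzdef
  set t1 := g.filter (fun x => l < x) with ht1
  set bot := g.filter (fun x => x ≤ l) - Multiset.replicate z l with hbot
  set a := t1.map (· - l) + Multiset.replicate z 0 with ha
  set bb := pconj l bot with hbb
  have hcardt1 : Multiset.card t1 = cnt g (l + 1) := by
    rw [ht1, cnt_eq_card_filter]
    exact congrArg _ (Multiset.filter_congr (fun x _ => by omega))
  have hcarda : Multiset.card a = k := by
    rw [ha, Multiset.card_add, Multiset.card_map, Multiset.card_replicate, hcardt1]
    omega
  have hcardb : Multiset.card bb = l := card_pconj _ _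
  have hbotmem : ∀ x ∈ bot, 0 < x ∧ x ≤ l := by
    intro x hx
    have hx' : x ∈ g.filter (fun x => x ≤ l) := Multiset.mem_of_le tsub_le_self hx
    exact ⟨hg x (Multiset.mem_filter.1 hx').1, (Multiset.mem_filter.1 hx').2⟩
  have hmconj : mconj bb = bot := mconj_pconj hbotmem
  have hmap : a.map (· + l) = t1 + Multiset.replicate z l := by
    rw [ha, Multiset.map_add, Multiset.map_map, Multiset.map_replicate]
    congr 1
    · rw [Multiset.map_congr (g := fun x : ℕ => x) rfl, Multiset.map_id']
      intro x hx
      have : l < x := (Multiset.mem_filter.1 (by rw [ht1] at hx; exact hx)).2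
      simp only [Function.comp_apply]
      omega
    · rw [Nat.zero_add]
  have key : (a.map (· + Multiset.card bb) + mconj bb).filter (0 < ·) = g := by
    rw [hcardb, hmap, hmconj]
    rcases Nat.eq_zero_or_pos l with hl0 | hlpos
    · have hbot0 : bot = 0 := by
        rw [hbot, hl0]
        have : g.filter (fun x => x ≤ 0) = 0 := by
          rw [Multiset.filter_eq_nil]
          intro x hx
          have := hg x hx
          omega
        rw [this]
        exact zero_tsub _
      have ht1g : t1 = g := by
        rw [ht1, hl0, Multiset.filter_eq_self]
        intro x hx
        exact hg x hx
      rw [hbot0, ht1g, hl0, add_zero, Multiset.filter_add]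
      have h1 : g.filter (0 < ·) = g := Multiset.filter_eq_self.2 hg
      have h2 : (Multiset.replicate z 0).filter ((0 < ·) : ℕ → Prop) = 0 := by
        rw [Multiset.filter_eq_nil]
        intro x hx
        rw [Multiset.eq_of_mem_replicate hx]
        omega
      rw [h1, h2, add_zero]
    · have hkcnt : z ≤ g.count l := by
        rcases Nat.eq_zero_or_pos k with hk0 | hkpos
        · omega
        · have hkl : k ≤ cnt g l := by
            rcases hCk with h | h
            · exfalso
              rcases le_or_gt 0 m with hm0 | hm0
              · have : m.toNat = m.toNat := rfl
                omega
              · omega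
            · have htn2 : ((k : ℤ) - m).toNat = l := by omega
              rwa [htn2] at h
          have := cnt_succ g l
          omega
      have hrep : Multiset.replicate z l ≤ g.filter (fun x => x ≤ l) := by
        rw [← Multiset.le_count_iff_replicate_le, Multiset.count_filter, if_pos (le_refl l)]
        exact hkcnt
      have hsplit : Multiset.replicate z l + bot = g.filter (fun x => x ≤ l) := by
        rw [hbot]
        exact add_tsub_cancel_of_le hrep
      rw [add_assoc, hsplit]
      have : t1 + g.filter (fun x => x ≤ l) = g := by
        rw [ht1]
        have := Multiset.filter_add_not (fun x => l < x) g
        have hcongr : Multiset.filter (fun x => ¬ l < x) g =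
            Multiset.filter (fun x => x ≤ l) g :=
          Multiset.filter_congr (fun x _ => by omega)
        rw [hcongr] at this
        exact this
      rw [this, Multiset.filter_eq_self]
      exact hg
  rw [show undurfee (m, g) = (a, bb) from rfl]
  show ((Multiset.card a : ℤ) - Multiset.card bb,
    (a.map (· + Multiset.card bb) + mconj bb).filter (0 < ·)) = (m, g)
  rw [Prod.mk.injEq]
  constructor
  · rw [hcarda, hcardb]
    omega
  · exact key

/-! ### The grand bijection and counting -/

lemma eA_sum (lam : { m : Multiset ℕ // IsDistinctOdd m }) :
    lam.val.sum = 2 * (eA lam).sum + (Multiset.card (eA lam)) ^ 2 := by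
  have := eA_symm_sum (eA lam)
  rwa [Equiv.symm_apply_apply] at this

lemma eA_card (lam : { m : Multiset ℕ // IsDistinctOdd m }) :
    Multiset.card lam.val = Multiset.card (eA lam) := by
  have := eA_symm_card (eA lam)
  rwa [Equiv.symm_apply_apply] at this

lemma durfee_weight (a b : Multiset ℕ) :
    (durfee (a, b)).1.natAbs ^ 2 + 2 * (durfee (a, b)).2.sum =
      2 * a.sum + (Multiset.card a) ^ 2 + (2 * b.sum + (Multiset.card b) ^ 2) := by
  have h1 := durfee_fst (a, b)
  have h2 := durfee_sum (a, b)
  dsimp only at h1 h2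
  have habs : ((durfee (a, b)).1.natAbs ^ 2 : ℤ) = ((durfee (a, b)).1) ^ 2 := by
    rw [sq, sq, Int.natAbs_mul_self']
  have key : (((durfee (a, b)).1.natAbs : ℤ) ^ 2 + 2 * ((durfee (a, b)).2.sum : ℤ) : ℤ) =
      2 * (a.sum : ℤ) + (Multiset.card a : ℤ) ^ 2 +
        (2 * (b.sum : ℤ) + (Multiset.card b : ℤ) ^ 2) := by
    rw [habs, h1]
    have h2' : ((durfee (a, b)).2.sum : ℤ) =
        (a.sum : ℤ) + b.sum + (Multiset.card a) * (Multiset.card b) := by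
      exact_mod_cast congrArg (Nat.cast : ℕ → ℤ) h2
    rw [h2']
    ring
  exact_mod_cast key

noncomputable def grand (n : ℕ) :
    { x : Multiset ℕ × Multiset ℕ //
        IsDistinctOdd x.1 ∧ IsDistinctOdd x.2 ∧ x.1.sum + x.2.sum = n } ≃
    { p : ℤ × Multiset ℕ // (∀ i ∈ p.2, 0 < i) ∧ p.1.natAbs ^ 2 + 2 * p.2.sum = n } where
  toFun x := ⟨durfee (eA ⟨x.val.1, x.prop.1⟩, eA ⟨x.val.2, x.prop.2.1⟩), by
    refine ⟨durfee_pos _, ?_⟩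
    rw [durfee_weight]
    have h1 := eA_sum ⟨x.val.1, x.prop.1⟩
    have h2 := eA_sum ⟨x.val.2, x.prop.2.1⟩
    have h3 := x.prop.2.2
    simp only at h1 h2
    omega⟩
  invFun p := ⟨((eA.symm (undurfee p.val).1).val, (eA.symm (undurfee p.val).2).val), by
    refine ⟨(eA.symm _).prop, (eA.symm _).prop, ?_⟩
    have hd : durfee (undurfee p.val) = p.val := by
      have := durfee_right p.val.1 p.val.2 (fun i hi => p.prop.1 i hi)
      rwa [Prod.mk.eta] at this
    have hw := durfee_weight (undurfee p.val).1 (undurfee p.val).2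
    rw [Prod.mk.eta, hd] at hw
    have h1 := eA_symm_sum (undurfee p.val).1
    have h2 := eA_symm_sum (undurfee p.val).2
    have h3 := p.prop.2
    dsimp only
    omega⟩
  left_inv := by
    rintro ⟨⟨m1, m2⟩, h1, h2, h3⟩
    apply Subtype.ext
    dsimp only
    have hd := durfee_left (eA ⟨m1, h1⟩) (eA ⟨m2, h2⟩)
    rw [hd]
    dsimp only
    rw [Equiv.symm_apply_apply, Equiv.symm_apply_apply]
  right_inv := by
    rintro ⟨⟨m, g⟩, hp, hw⟩
    apply Subtype.ext
    dsimp only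
    rw [Subtype.coe_eta, Subtype.coe_eta, Equiv.apply_symm_apply, Equiv.apply_symm_apply,
      Prod.mk.eta]
    exact durfee_right m g (fun i hi => hp i hi)

/-! ### Counting -/

lemma nat_card_sigma {ι : Type*} [Fintype ι] (F : ι → Type*) [∀ i, Finite (F i)] :
    Nat.card ((i : ι) × F i) = ∑ i, Nat.card (F i) := by
  classical
  letI : ∀ i, Fintype (F i) := fun i => Fintype.ofFinite _
  rw [Nat.card_eq_fintype_card, Fintype.card_sigma]
  exact Finset.sum_congr rfl fun i _ => (Nat.card_eq_fintype_card).symm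

instance finite_pe (b : ℕ) : Finite { g : Multiset ℕ // (∀ i ∈ g, 0 < i) ∧ 2 * g.sum = b } := by
  apply Finite.of_injective
    (fun g => (⟨g.val, fun {i} hi => g.prop.1 i hi, by have := g.prop.2; omega⟩ :
      Nat.Partition (b / 2)))
  intro g g' h
  exact Subtype.ext (congrArg Nat.Partition.parts h)

lemma natAbs_eq_of_sq {x y : ℤ} {a : ℕ} (hx : x.natAbs ^ 2 = a) (hy : y.natAbs ^ 2 = a) :
    x.natAbs = y.natAbs := by
  have h : x.natAbs ^ 2 = y.natAbs ^ 2 := by omega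
  exact Nat.pow_left_injective (by norm_num) h

instance finite_theta (a : ℕ) : Finite { mm : ℤ // mm.natAbs ^ 2 = a } := by
  apply Finite.of_injective
    (fun (mm : { mm : ℤ // mm.natAbs ^ 2 = a }) => decide (0 ≤ mm.val))
  rintro ⟨x, hx⟩ ⟨y, hy⟩ h
  simp only [decide_eq_decide] at h
  have habs : x.natAbs = y.natAbs := natAbs_eq_of_sq hx hy
  apply Subtype.ext
  show x = y
  rcases Int.natAbs_eq x with hx1 | hx1 <;> rcases Int.natAbs_eq y with hy1 | hy1 <;> omega

lemma theta_card (a : ℕ) :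
    Nat.card { mm : ℤ // mm.natAbs ^ 2 = a } =
      (if a = 0 then 1 else if IsSquare a then 2 else 0) := by
  rcases eq_or_ne a 0 with rfl | ha
  · rw [if_pos rfl]
    haveI : Nonempty { mm : ℤ // mm.natAbs ^ 2 = 0 } := ⟨⟨0, by simp⟩⟩
    haveI : Subsingleton { mm : ℤ // mm.natAbs ^ 2 = 0 } := by
      constructor
      rintro ⟨x, hx⟩ ⟨y, hy⟩
      apply Subtype.ext
      show x = y
      have hx' : x.natAbs = 0 := by simpa using hx
      have hy' : y.natAbs = 0 := by simpa using hy
      omega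
    rw [Nat.card_unique]
  · rw [if_neg ha]
    by_cases hsq : IsSquare a
    · rw [if_pos hsq]
      obtain ⟨r, rfl⟩ := hsq
      have hr : 0 < r := Nat.pos_of_ne_zero (by intro h; subst h; simp at ha)
      rw [Nat.card_eq_two_iff]
      refine ⟨⟨(r : ℤ), by rw [Int.natAbs_natCast]; ring⟩,
        ⟨-(r : ℤ), by rw [Int.natAbs_neg, Int.natAbs_natCast]; ring⟩, ?_, ?_⟩
      · intro h
        rw [Subtype.ext_iff] at h
        have : (r : ℤ) = -(r : ℤ) := h
        omega
      · apply Set.eq_univ_of_forall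
        rintro ⟨x, hx⟩
        have habs : x.natAbs = r := by
          have h2 : x.natAbs ^ 2 = r ^ 2 := by rw [hx]; ring
          exact Nat.pow_left_injective (by norm_num) h2
        rcases Int.natAbs_eq x with hx1 | hx1
        · left
          apply Subtype.ext
          show x = (r : ℤ)
          omega
        · right
          apply Subtype.ext
          show x = -(r : ℤ)
          omega
    · rw [if_neg hsq]
      haveI : IsEmpty { mm : ℤ // mm.natAbs ^ 2 = a } := by
        constructor
        rintro ⟨x, hx⟩
        exact hsq ⟨x.natAbs, by rw [← hx]; ring⟩
      exact Nat.card_of_isEmpty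

noncomputable def peCount (b : ℕ) : ℕ := Nat.card { g : Multiset ℕ // (∀ i ∈ g, 0 < i) ∧ 2 * g.sum = b }

def thetaCount (a : ℕ) : ℕ := if a = 0 then 1 else if IsSquare a then 2 else 0

abbrev SideType (n : ℕ) :=
  { p : ℤ × Multiset ℕ // (∀ i ∈ p.2, 0 < i) ∧ p.1.natAbs ^ 2 + 2 * p.2.sum = n }

def fibermap (n : ℕ) (p : SideType n) : ↥(Finset.HasAntidiagonal.antidiagonal n) :=
  ⟨(p.val.1.natAbs ^ 2, 2 * p.val.2.sum), Finset.HasAntidiagonal.mem_antidiagonal.2 p.prop.2⟩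

def fiberEquiv (n : ℕ) (ab : ↥(Finset.HasAntidiagonal.antidiagonal n)) :
    { p : SideType n // fibermap n p = ab } ≃
      { mm : ℤ // mm.natAbs ^ 2 = ab.val.1 } ×
        { g : Multiset ℕ // (∀ i ∈ g, 0 < i) ∧ 2 * g.sum = ab.val.2 } where
  toFun q := ⟨⟨q.val.val.1, congrArg (fun z => z.val.1) q.prop⟩,
    ⟨q.val.val.2, q.val.prop.1, congrArg (fun z => z.val.2) q.prop⟩⟩
  invFun r := ⟨⟨(r.1.val, r.2.val), r.2.prop.1, by
      rw [r.1.prop, r.2.prop.2]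
      exact Finset.HasAntidiagonal.mem_antidiagonal.1 ab.prop⟩, by
    apply Subtype.ext
    show (r.1.val.natAbs ^ 2, 2 * r.2.val.sum) = ab.val
    rw [r.1.prop, r.2.prop.2]⟩
  left_inv q := by
    apply Subtype.ext
    apply Subtype.ext
    exact Prod.mk.eta
  right_inv r := by
    apply Prod.ext
    · apply Subtype.ext; rfl
    · apply Subtype.ext; rfl

instance fiber_finite (n : ℕ) (ab : ↥(Finset.HasAntidiagonal.antidiagonal n)) :
    Finite { p : SideType n // fibermap n p = ab } :=
  Finite.of_equiv _ (fiberEquiv n ab).symm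

lemma count_side (n : ℕ) :
    Nat.card (SideType n) =
      ∑ ab ∈ Finset.HasAntidiagonal.antidiagonal n, thetaCount ab.1 * peCount ab.2 := by
  rw [← Nat.card_congr (Equiv.sigmaFiberEquiv (fibermap n))]
  rw [nat_card_sigma]
  rw [← Finset.sum_coe_sort (Finset.HasAntidiagonal.antidiagonal n) (fun ab => thetaCount ab.1 * peCount ab.2)]
  apply Finset.sum_congr rfl
  intro ab _
  rw [Nat.card_congr (fiberEquiv n ab), Nat.card_prod, theta_card]
  rfl

lemma Dcount_eq (n : ℕ) :
    Nat.card { x : Multiset ℕ × Multiset ℕ //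
        IsDistinctOdd x.1 ∧ IsDistinctOdd x.2 ∧ x.1.sum + x.2.sum = n } =
      ∑ ab ∈ Finset.HasAntidiagonal.antidiagonal n, thetaCount ab.1 * peCount ab.2 := by
  rw [Nat.card_congr (grand n), count_side]

/-! ### Partitions into parts ≤ j and the finite product -/

noncomputable def peP (j b : ℕ) : ℕ :=
  Nat.card { g : Multiset ℕ // (∀ i ∈ g, 0 < i ∧ i ≤ j) ∧ 2 * g.sum = b }

instance (j b : ℕ) : Finite { g : Multiset ℕ // (∀ i ∈ g, 0 < i ∧ i ≤ j) ∧ 2 * g.sum = b } := by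
  apply Finite.of_injective (fun g =>
    (⟨g.val, fun i hi => (g.prop.1 i hi).1, g.prop.2⟩ :
      { g : Multiset ℕ // (∀ i ∈ g, 0 < i) ∧ 2 * g.sum = b }))
  intro g g' h
  simp only [Subtype.mk.injEq] at h
  exact Subtype.ext h

lemma peP_zero (b : ℕ) : peP 0 b = if b = 0 then 1 else 0 := by
  rcases eq_or_ne b 0 with rfl | hb
  · rw [if_pos rfl, peP]
    haveI : Nonempty { g : Multiset ℕ // (∀ i ∈ g, 0 < i ∧ i ≤ 0) ∧ 2 * g.sum = 0 } :=
      ⟨⟨0, by simp, by simp⟩⟩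
    haveI : Subsingleton { g : Multiset ℕ // (∀ i ∈ g, 0 < i ∧ i ≤ 0) ∧ 2 * g.sum = 0 } := by
      constructor
      rintro ⟨g, hg, _⟩ ⟨g', hg', _⟩
      apply Subtype.ext
      show g = g'
      have h1 : g = 0 := Multiset.eq_zero_of_forall_notMem fun i hi => by
        have := hg i hi; omega
      have h2 : g' = 0 := Multiset.eq_zero_of_forall_notMem fun i hi => by
        have := hg' i hi; omega
      rw [h1, h2]
    exact Nat.card_unique
  · rw [if_neg hb, peP]
    haveI : IsEmpty { g : Multiset ℕ // (∀ i ∈ g, 0 < i ∧ i ≤ 0) ∧ 2 * g.sum = b } := by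
      constructor
      rintro ⟨g, hg, hs⟩
      have h1 : g = 0 := Multiset.eq_zero_of_forall_notMem fun i hi => by
        have := hg i hi; omega
      rw [h1] at hs
      simp at hs
      omega
    exact Nat.card_of_isEmpty

lemma peCount_eq_peP {b N : ℕ} (h : b ≤ N) : peCount b = peP N b := by
  apply Nat.card_congr
  apply Equiv.subtypeEquivRight
  intro g
  constructor
  · rintro ⟨hpos, hsum⟩
    refine ⟨fun i hi => ⟨hpos i hi, ?_⟩, hsum⟩
    have := Multiset.single_le_sum (fun x _ => Nat.zero_le x) i hi
    omega
  · rintro ⟨hb, hsum⟩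
    exact ⟨fun i hi => (hb i hi).1, hsum⟩

def pePSplit (j b : ℕ) (hb : 2 * (j + 1) ≤ b) :
    { g : Multiset ℕ // (∀ i ∈ g, 0 < i ∧ i ≤ j + 1) ∧ 2 * g.sum = b } ≃
      { g : Multiset ℕ // (∀ i ∈ g, 0 < i ∧ i ≤ j) ∧ 2 * g.sum = b } ⊕
      { g : Multiset ℕ // (∀ i ∈ g, 0 < i ∧ i ≤ j + 1) ∧ 2 * g.sum = b - 2 * (j + 1) } where
  toFun g :=
    if hmem : (j + 1) ∈ g.val then
      Sum.inr ⟨g.val.erase (j + 1), fun i hi => g.prop.1 i (Multiset.mem_of_mem_erase hi), by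
        have hs := g.prop.2
        have hc : g.val = (j + 1) ::ₘ g.val.erase (j + 1) := (Multiset.cons_erase hmem).symm
        have : g.val.sum = (j + 1) + (g.val.erase (j + 1)).sum := by
          conv_lhs => rw [hc]
          rw [Multiset.sum_cons]
        omega⟩
    else
      Sum.inl ⟨g.val, fun i hi => by
        have h1 := g.prop.1 i hi
        have hne : i ≠ j + 1 := fun he => hmem (he ▸ hi)
        exact ⟨h1.1, by omega⟩, g.prop.2⟩
  invFun r :=
    match r with
    | Sum.inl g => ⟨g.val, fun i hi => ⟨(g.prop.1 i hi).1, by have := (g.prop.1 i hi).2; omega⟩,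
        g.prop.2⟩
    | Sum.inr g => ⟨(j + 1) ::ₘ g.val, fun i hi => by
        rcases Multiset.mem_cons.1 hi with rfl | hi'
        · exact ⟨by omega, le_rfl⟩
        · exact g.prop.1 i hi', by
        rw [Multiset.sum_cons]
        have := g.prop.2
        omega⟩
  left_inv g := by
    dsimp only
    by_cases hmem : (j + 1) ∈ g.val
    · rw [dif_pos hmem]
      exact Subtype.ext (Multiset.cons_erase hmem)
    · rw [dif_neg hmem]
  right_inv r := by
    rcases r with g | g
    · have hmem : (j + 1) ∉ g.val := fun hmem => by
        have := (g.prop.1 _ hmem).2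
        omega
      dsimp only
      rw [dif_neg hmem]
    · have hmem : (j + 1) ∈ (j + 1) ::ₘ g.val := Multiset.mem_cons_self _ _
      dsimp only
      rw [dif_pos hmem]
      congr 1
      exact Subtype.ext (Multiset.erase_cons_head _ _)

lemma peP_rec (j b : ℕ) :
    peP (j + 1) b = peP j b + (if 2 * (j + 1) ≤ b then peP (j + 1) (b - 2 * (j + 1)) else 0) := by
  by_cases hb : 2 * (j + 1) ≤ b
  · rw [if_pos hb, peP, Nat.card_congr (pePSplit j b hb), Nat.card_sum]
    rfl
  · rw [if_neg hb, add_zero]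
    apply Nat.card_congr
    apply Equiv.subtypeEquivRight
    intro g
    constructor
    · rintro ⟨hg, hsum⟩
      refine ⟨fun i hi => ⟨(hg i hi).1, ?_⟩, hsum⟩
      have h2 := (hg i hi).2
      rcases Nat.lt_or_ge i (j + 1) with h | h
      · omega
      · exfalso
        have hij : i = j + 1 := by omega
        have := Multiset.single_le_sum (fun x _ => Nat.zero_le x) i hi
        omega
    · rintro ⟨hg, hsum⟩
      exact ⟨fun i hi => ⟨(hg i hi).1, by have := (hg i hi).2; omega⟩, hsum⟩

open PowerSeries in
lemma stepEq (M : ℕ) :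
    (PowerSeries.mk fun b => (peP (M + 1) b : ℤ)) * (1 - PowerSeries.X ^ (2 * (M + 1))) =
      PowerSeries.mk fun b => (peP M b : ℤ) := by
  ext b
  rw [mul_sub, mul_one, map_sub, coeff_mk, PowerSeries.coeff_mul_X_pow', coeff_mk]
  have hrec := peP_rec M b
  split_ifs with h
  · rw [coeff_mk]
    rw [if_pos h] at hrec
    omega
  · rw [coeff_mk] at *
    rw [if_neg h] at hrec
    omega

open PowerSeries in
lemma prodP (M : ℕ) :
    (PowerSeries.mk fun b => (peP M b : ℤ)) *
      ∏ k ∈ Finset.Icc 1 M, (1 - PowerSeries.X ^ (2 * k)) = 1 := by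
  induction M with
  | zero =>
    rw [show Finset.Icc 1 0 = ∅ from Finset.Icc_eq_empty (by omega), Finset.prod_empty, mul_one]
    ext b
    rw [coeff_mk, PowerSeries.coeff_one]
    rw [peP_zero]
    split_ifs <;> simp
  | succ M ih =>
    rw [Finset.prod_Icc_succ_top (by omega)]
    have : (PowerSeries.mk fun b => (peP (M + 1) b : ℤ)) *
        ((∏ k ∈ Finset.Icc 1 M, (1 - PowerSeries.X ^ (2 * k))) *
          (1 - PowerSeries.X ^ (2 * (M + 1)))) =
        ((PowerSeries.mk fun b => (peP (M + 1) b : ℤ)) * (1 - PowerSeries.X ^ (2 * (M + 1)))) *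
          ∏ k ∈ Finset.Icc 1 M, (1 - PowerSeries.X ^ (2 * k)) := by
      ring
    rw [this, stepEq M, ih]

lemma coeff_mul_truncagree {f f' g : PowerSeries ℤ} {b : ℕ}
    (h : ∀ i ≤ b, PowerSeries.coeff (R := ℤ) i f = PowerSeries.coeff (R := ℤ) i f') :
    PowerSeries.coeff (R := ℤ) b (f * g) = PowerSeries.coeff (R := ℤ) b (f' * g) := by
  rw [PowerSeries.coeff_mul, PowerSeries.coeff_mul]
  apply Finset.sum_congr rfl
  intro p hp
  have hpb : p.1 ≤ b := by
    have := Finset.HasAntidiagonal.mem_antidiagonal.1 hp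
    omega
  rw [h p.1 hpb]

theorem final_thm (N : ℕ) :
    PowerSeries.coeff (R := ℤ) N
      ((PowerSeries.mk fun n => (Nat.card {x : Multiset ℕ × Multiset ℕ //
          IsDistinctOdd x.1 ∧ IsDistinctOdd x.2 ∧ x.1.sum + x.2.sum = n} : ℤ)) *
        ∏ k ∈ Finset.Icc 1 N, (1 - PowerSeries.X ^ (2 * k))) =
    (if N = 0 then 1 else if IsSquare N then 2 else 0) := by
  set Q := ∏ k ∈ Finset.Icc 1 N, (1 - PowerSeries.X ^ (2 * k) : PowerSeries ℤ) with hQ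
  have step1 : (PowerSeries.mk fun n => (Nat.card {x : Multiset ℕ × Multiset ℕ //
          IsDistinctOdd x.1 ∧ IsDistinctOdd x.2 ∧ x.1.sum + x.2.sum = n} : ℤ)) =
      (PowerSeries.mk fun a => (thetaCount a : ℤ)) *
        (PowerSeries.mk fun b => (peCount b : ℤ)) := by
    ext n
    rw [PowerSeries.coeff_mk, PowerSeries.coeff_mul, Dcount_eq]
    push_cast
    apply Finset.sum_congr rfl
    intro p _
    rw [PowerSeries.coeff_mk, PowerSeries.coeff_mk]
  have step2 : ∀ b ≤ N, PowerSeries.coeff (R := ℤ) b ((PowerSeries.mk fun b => (peCount b : ℤ)) * Q) =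
      (if b = 0 then 1 else 0) := by
    intro b hb
    have hagree : ∀ i ≤ b, PowerSeries.coeff (R := ℤ) i (PowerSeries.mk fun b => (peCount b : ℤ)) =
        PowerSeries.coeff (R := ℤ) i (PowerSeries.mk fun b => (peP N b : ℤ)) := by
      intro i hi
      rw [PowerSeries.coeff_mk, PowerSeries.coeff_mk, peCount_eq_peP (show i ≤ N by omega)]
    rw [coeff_mul_truncagree hagree, hQ, prodP N, PowerSeries.coeff_one]
  rw [step1, mul_assoc, PowerSeries.coeff_mul]
  rw [Finset.sum_eq_single_of_mem ((N, 0) : ℕ × ℕ) (Finset.HasAntidiagonal.mem_antidiagonal.2 (by omega))]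
  · rw [step2 0 (by omega), if_pos rfl, mul_one, PowerSeries.coeff_mk, thetaCount]
    push_cast
    split_ifs <;> norm_num
  · intro p hp hne
    have hpmem := Finset.HasAntidiagonal.mem_antidiagonal.1 hp
    have hp2 : p.2 ≠ 0 := by
      intro h0
      apply hne
      have : p.1 = N := by omega
      rw [← this, ← h0]
    rw [step2 p.2 (by omega), if_neg hp2, mul_zero]

theorem distinct_odd_pairs_gf (N : ℕ) :
    PowerSeries.coeff (R := ℤ) N
      ((PowerSeries.mk fun n => (Nat.card {x : Multiset ℕ × Multiset ℕ //
          IsDistinctOdd x.1 ∧ IsDistinctOdd x.2 ∧ x.1.sum + x.2.sum = n} : ℤ)) *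
        ∏ k ∈ Finset.Icc 1 N, (1 - PowerSeries.X ^ (2 * k))) =
    (if N = 0 then 1 else if IsSquare N then 2 else 0) := final_thm N
end

section
/- For all non-negative integers n, the number of pairs of partitions (λ¹, λ²) with odd parts distinct in each, of total size 3n+2, where each such pair corresponds under the established bijection to a quadruple with λ⁴ of square size, is a multiple of 3; equivalently, the number of quadruples (λ¹, λ², λ³, λ⁴) with λ¹, λ², λ³ partitions into even parts, λ⁴ of size a perfect square counted with multiplicity 2 for positive squares and 1 for zero, and total size 3n+2, is divisible by 3. -/
/-- Sum of the odd staircase with `k` parts is `k ^ 2`. -/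
lemma staircase_sum (k : ℕ) : ((Multiset.range k).map (fun i => 2 * i + 1)).sum = k ^ 2 := by
  induction k with
  | zero => simp
  | succ k ih => rw [Multiset.range_succ, Multiset.map_cons, Multiset.sum_cons, ih]; ring

lemma sq_mod_three (k : ℕ) : k ^ 2 % 3 ≠ 2 := by
  have h : k ^ 2 % 3 = (k % 3) ^ 2 % 3 := by rw [Nat.pow_mod]
  have h2 : k % 3 < 3 := Nat.mod_lt _ (by norm_num)
  interval_cases h3 : k % 3 <;> simp_all

/-- If a type admits a fixed-point-free permutation of order dividing 3,
then its cardinality is divisible by 3. -/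
lemma dvd_card_of_perm {T : Type*} (e : Equiv.Perm T) (h3 : e ^ 3 = 1)
    (hfree : ∀ x, e x ≠ x) : 3 ∣ Nat.card T := by
  cases finite_or_infinite T
  · have hp : IsPGroup 3 (Subgroup.zpowers e) := by
      intro g
      refine ⟨1, Subtype.ext ?_⟩
      obtain ⟨m, hm⟩ := g.2
      simp only at hm
      push_cast
      rw [← hm, ← zpow_natCast, ← zpow_mul, mul_comm, zpow_mul, zpow_natCast, h3,
        one_zpow]
    have hmod := hp.card_modEq_card_fixedPoints T
    have hfix : IsEmpty (MulAction.fixedPoints (Subgroup.zpowers e) T) := by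
      rw [isEmpty_subtype]
      intro x hx
      exact hfree x (hx ⟨e, Subgroup.mem_zpowers e⟩)
    have h0 : Nat.card (MulAction.fixedPoints (Subgroup.zpowers e) T) = 0 :=
      Nat.card_of_isEmpty
    rw [h0] at hmod
    exact (Nat.modEq_zero_iff_dvd).mp hmod
  · simp [Nat.card_eq_zero_of_infinite]

theorem quadruple_congruence (n : ℕ) :
    3 ∣ Nat.card {x : (Multiset ℕ × Multiset ℕ × Multiset ℕ) × (Multiset ℕ × Bool) //
      IsEvenPartition x.1.1 ∧ IsEvenPartition x.1.2.1 ∧ IsEvenPartition x.1.2.2 ∧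
      IsOddStaircase x.2.1 ∧ (x.2.2 = true → x.2.1 ≠ 0) ∧
      x.1.1.sum + x.1.2.1.sum + x.1.2.2.sum + x.2.1.sum = 3 * n + 2} := by
  apply dvd_card_of_perm
    (e := { toFun := fun x => ⟨((x.1.1.2.1, x.1.1.2.2, x.1.1.1), x.1.2), by
              obtain ⟨h1, h2, h3, h4, h5, h6⟩ := x.2
              exact ⟨h2, h3, h1, h4, h5, by dsimp only; omega⟩⟩
            invFun := fun x => ⟨((x.1.1.2.2, x.1.1.1, x.1.1.2.1), x.1.2), by
              obtain ⟨h1, h2, h3, h4, h5, h6⟩ := x.2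
              exact ⟨h3, h1, h2, h4, h5, by dsimp only; omega⟩⟩
            left_inv := fun x => rfl
            right_inv := fun x => rfl })
  · apply Equiv.ext
    intro x
    rfl
  · rintro ⟨⟨⟨a, b, c⟩, d, t⟩, h1, h2, h3, h4, h5, h6⟩ hx
    simp only [Subtype.mk.injEq, Prod.mk.injEq, Equiv.coe_fn_mk] at hx
    obtain ⟨⟨hba, hcb, hac⟩, -⟩ := hx
    obtain ⟨k, hk⟩ := h4
    dsimp only at h6 hk
    rw [hk, staircase_sum] at h6
    subst hba hcb
    exact sq_mod_three k (by omega)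
end

section
/- For N not divisible by 3, the number of ordered triples (λ¹, λ², λ³) of arbitrary partitions with |λ¹| + |λ²| + |λ³| = N is divisible by 3. -/
/-- The subtype of triples of partitions with total sum `N`. -/
abbrev TripleX (N : ℕ) := {t : Multiset ℕ × Multiset ℕ × Multiset ℕ //
      IsPartitionM t.1 ∧ IsPartitionM t.2.1 ∧ IsPartitionM t.2.2 ∧
      t.1.sum + t.2.1.sum + t.2.2.sum = N}

/-- The cyclic shift on triples. -/
def tripleShift (N : ℕ) : TripleX N → TripleX N := fun t =>
  ⟨(t.1.2.1, t.1.2.2, t.1.1), t.2.2.1, t.2.2.2.1, t.2.1, by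
    have := t.2.2.2.2; simp only [] at this ⊢; omega⟩

lemma tripleShift_three (N : ℕ) : (tripleShift N)^[3] = id := by
  funext t
  rfl

lemma tripleShift_mod (N : ℕ) (n : ℕ) :
    (tripleShift N)^[n % 3] = (tripleShift N)^[n] := by
  conv_rhs => rw [← Nat.div_add_mod n 3]
  rw [Function.iterate_add, Function.iterate_mul, tripleShift_three]
  simp

instance tripleAction (N : ℕ) : MulAction (Multiplicative (ZMod 3)) (TripleX N) where
  smul a t := (tripleShift N)^[(Multiplicative.toAdd a).val] t
  one_smul t := by
    show (tripleShift N)^[(Multiplicative.toAdd (1 : Multiplicative (ZMod 3))).val] t = t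
    simp
  mul_smul a b t := by
    show (tripleShift N)^[(Multiplicative.toAdd (a * b)).val] t
      = (tripleShift N)^[(Multiplicative.toAdd a).val]
        ((tripleShift N)^[(Multiplicative.toAdd b).val] t)
    rw [← Function.iterate_add_apply]
    have h3 : Multiplicative.toAdd (a * b) = Multiplicative.toAdd a + Multiplicative.toAdd b := rfl
    rw [h3, ZMod.val_add, tripleShift_mod]

instance : Fact (Nat.Prime 3) := ⟨by norm_num⟩

lemma tripleFixedEmpty (N : ℕ) (h : ¬ 3 ∣ N) :
    IsEmpty (MulAction.fixedPoints (Multiplicative (ZMod 3)) (TripleX N)) := by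
  constructor
  rintro ⟨x, hfix⟩
  have h1 := (MulAction.mem_fixedPoints).mp hfix (Multiplicative.ofAdd (1 : ZMod 3))
  have h1' : tripleShift N x = x := h1
  obtain ⟨⟨a, b, c⟩, ha, hb, hc, hsum⟩ := x
  have h2 : ((b, c, a) : Multiset ℕ × Multiset ℕ × Multiset ℕ) = (a, b, c) :=
    congrArg Subtype.val h1'
  have hba : b = a := congrArg Prod.fst h2
  have hcb : c = b := congrArg (fun p => p.2.1) h2
  apply h
  refine ⟨a.sum, ?_⟩
  simp only [] at hsum
  subst hba; subst hcb
  omega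

theorem partition_triples_congruence (N : ℕ) (h : ¬ 3 ∣ N) :
    3 ∣ Nat.card {t : Multiset ℕ × Multiset ℕ × Multiset ℕ //
      IsPartitionM t.1 ∧ IsPartitionM t.2.1 ∧ IsPartitionM t.2.2 ∧
      t.1.sum + t.2.1.sum + t.2.2.sum = N} := by
  by_cases hF : Finite (TripleX N)
  · have hp : IsPGroup 3 (Multiplicative (ZMod 3)) := by
      apply IsPGroup.of_card (n := 1)
      simp [Nat.card_eq_fintype_card]
    have hmod := hp.card_modEq_card_fixedPoints (α := TripleX N)
    haveI := tripleFixedEmpty N h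
    have h0 : Nat.card
        (MulAction.fixedPoints (Multiplicative (ZMod 3)) (TripleX N)) = 0 :=
      Nat.card_of_isEmpty
    rw [h0] at hmod
    exact Nat.modEq_zero_iff_dvd.mp hmod
  · haveI := not_finite_iff_infinite.mp hF
    rw [Nat.card_eq_zero_of_infinite]
    exact dvd_zero 3
end
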